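/- arXiv:math/0610383 — 8 statements merged into one kernel-verified Lean document; each statement's English description precedes it below -/
import Mathlib

section
/- For each i = 1,…,N define the KZ operator D_i, acting on W-valued functions on an open set U ⊆ C_N, by (D_iψ)(z) = ∂ψ/∂z_i(z) − m Σ_{j≠i} (s_{ij}+1)ψ(z)/(z_i−z_j). Then the KZ operators commute: for every twice continuously differentiable function ψ : U → W and all i, j one has D_i(D_jψ) = D_j(D_iψ) on U. -/
open scoped BigOperators

noncomputable section

/-- The configuration space `C_N = {z ∈ ℂ^N : z_i ≠ z_j for i ≠ j}`. -/
def Cconf (N : ℕ) : Set (Fin N → ℂ) := {z | ∀ i j : Fin N, i ≠ j → z i ≠ z j}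

/-- `ψ` is a solution of the KZ equation on `U` with values in a space with
`S_N`-action `act` and parameter `m`:  `ψ` is differentiable on `U` and
`∂ψ/∂z_i(z) = m Σ_{j≠i} (s_{ij}+1)ψ(z)/(z_i−z_j)` for all `i` and `z ∈ U`. -/
def IsKZSol {N : ℕ} {W : Type*} [NormedAddCommGroup W] [NormedSpace ℂ W]
    (act : Equiv.Perm (Fin N) → W → W) (m : ℂ) (U : Set (Fin N → ℂ))
    (ψ : (Fin N → ℂ) → W) : Prop :=
  DifferentiableOn ℂ ψ U ∧
  ∀ z ∈ U, ∀ i : Fin N,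
    fderiv ℂ ψ z (Pi.single i 1) =
      m • ∑ j ∈ Finset.univ.filter (fun j => j ≠ i),
        (z i - z j)⁻¹ • (act (Equiv.swap i j) (ψ z) + ψ z)

/-- The `i`-th KZ operator `D_i`, acting on `W`-valued functions:
`(D_iψ)(z) = ∂ψ/∂z_i(z) − m Σ_{j≠i} (s_{ij}+1)ψ(z)/(z_i−z_j)`. -/
def KZop {N : ℕ} {W : Type*} [NormedAddCommGroup W] [NormedSpace ℂ W]
    (act : Equiv.Perm (Fin N) → W → W) (m : ℂ) (i : Fin N)
    (ψ : (Fin N → ℂ) → W) : (Fin N → ℂ) → W :=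
  fun z =>
    fderiv ℂ ψ z (Pi.single i 1) -
      m • ∑ j ∈ Finset.univ.filter (fun j => j ≠ i),
        (z i - z j)⁻¹ • (act (Equiv.swap i j) (ψ z) + ψ z)

open Equiv Finset

set_option maxHeartbeats 1000000

section KZAux

lemma swap_shift {α : Type*} [DecidableEq α] {x y z : α} (hxy : x ≠ y) (hxz : x ≠ z) :
    swap y z * swap x y = swap z x * swap y z := by
  have h := Equiv.swap_mul_swap_mul_swap hxy hxz
  calc swap y z * swap x y = swap y z * swap x y * swap y z * swap y z := by
        rw [mul_assoc, Equiv.swap_mul_self, mul_one]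
    _ = swap z x * swap y z := by rw [h]

lemma swap_disj_comm {α : Type*} [DecidableEq α] {a b c d : α} (h1 : a ≠ c) (h2 : a ≠ d)
    (h3 : b ≠ c) (h4 : b ≠ d) : swap a b * swap c d = swap c d * swap a b := by
  have hd : (swap a b).Disjoint (swap c d) := by
    intro x
    by_cases hxa : x = a
    · subst hxa; right; exact Equiv.swap_apply_of_ne_of_ne h1 h2
    · by_cases hxb : x = b
      · subst hxb; right; exact Equiv.swap_apply_of_ne_of_ne h3 h4
      · left; exact Equiv.swap_apply_of_ne_of_ne hxa hxb
  exact hd.commute.eq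

variable {N : ℕ} {W : Type*} [NormedAddCommGroup W] [NormedSpace ℂ W] [FiniteDimensional ℂ W]

/-- `s_{ab} + 1` as a continuous linear map. -/
def Sc (ρ : Representation ℂ (Equiv.Perm (Fin N)) W) (a b : Fin N) : W →L[ℂ] W :=
  LinearMap.toContinuousLinearMap (ρ (Equiv.swap a b) + LinearMap.id)

variable (ρ : Representation ℂ (Equiv.Perm (Fin N)) W)

@[simp] lemma Sc_apply (a b : Fin N) (w : W) : Sc ρ a b w = ρ (Equiv.swap a b) w + w := by
  simp [Sc]

lemma Sc_symm (a b : Fin N) : Sc ρ a b = Sc ρ b a := by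
  rw [Sc, Sc, Equiv.swap_comm]

lemma Sc_comp_sub (a b c d : Fin N) (w : W) :
    Sc ρ a b (Sc ρ c d w) - Sc ρ c d (Sc ρ a b w)
      = ρ (swap a b * swap c d) w - ρ (swap c d * swap a b) w := by
  simp only [Sc_apply, map_add, map_mul, Module.End.mul_apply, LinearMap.add_apply]
  abel

lemma Sc_comm (a b c d : Fin N) (h : swap a b * swap c d = swap c d * swap a b) (w : W) :
    Sc ρ a b (Sc ρ c d w) = Sc ρ c d (Sc ρ a b w) := by
  have := Sc_comp_sub ρ a b c d w
  rw [h, sub_self] at this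
  exact sub_eq_zero.mp this

lemma key (z : Fin N → ℂ) (hz : ∀ a b : Fin N, a ≠ b → z a ≠ z b)
    (i j : Fin N) (hij : i ≠ j) (w : W) :
    ∑ k ∈ univ.filter (fun t => t ≠ i), ∑ l ∈ univ.filter (fun t => t ≠ j),
      ((z i - z k)⁻¹ * (z j - z l)⁻¹) • Sc ρ i k (Sc ρ j l w)
    = ∑ k ∈ univ.filter (fun t => t ≠ j), ∑ l ∈ univ.filter (fun t => t ≠ i),
      ((z j - z k)⁻¹ * (z i - z l)⁻¹) • Sc ρ j k (Sc ρ i l w) := by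
  classical
  set Fi := univ.filter (fun t : Fin N => t ≠ i) with hFi
  set Fj := univ.filter (fun t : Fin N => t ≠ j) with hFj
  set G := univ.filter (fun t : Fin N => t ≠ i ∧ t ≠ j) with hG
  set c : Fin N → Fin N → W := fun k l =>
    ((z i - z k)⁻¹ * (z j - z l)⁻¹) •
      (Sc ρ i k (Sc ρ j l w) - Sc ρ j l (Sc ρ i k w)) with hc
  -- reduce to vanishing of the commutator sum
  have hr : (∑ k ∈ Fj, ∑ l ∈ Fi, ((z j - z k)⁻¹ * (z i - z l)⁻¹) • Sc ρ j k (Sc ρ i l w))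
      = ∑ k ∈ Fi, ∑ l ∈ Fj, ((z j - z l)⁻¹ * (z i - z k)⁻¹) • Sc ρ j l (Sc ρ i k w) :=
    Finset.sum_comm
  rw [hr, ← sub_eq_zero, ← Finset.sum_sub_distrib]
  have step1 : ∀ k, (∑ l ∈ Fj, ((z i - z k)⁻¹ * (z j - z l)⁻¹) • Sc ρ i k (Sc ρ j l w))
      - (∑ l ∈ Fj, ((z j - z l)⁻¹ * (z i - z k)⁻¹) • Sc ρ j l (Sc ρ i k w))
      = ∑ l ∈ Fj, c k l := by
    intro k
    rw [← Finset.sum_sub_distrib]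
    refine Finset.sum_congr rfl fun l _ => ?_
    simp only [hc, smul_sub, mul_comm ((z j - z l)⁻¹) ((z i - z k)⁻¹)]
  calc (∑ k ∈ Fi, ((∑ l ∈ Fj, ((z i - z k)⁻¹ * (z j - z l)⁻¹) • Sc ρ i k (Sc ρ j l w))
          - ∑ l ∈ Fj, ((z j - z l)⁻¹ * (z i - z k)⁻¹) • Sc ρ j l (Sc ρ i k w)))
      = ∑ k ∈ Fi, ∑ l ∈ Fj, c k l := by
        exact Finset.sum_congr rfl fun k _ => step1 k
    _ = 0 := ?_
  -- structure of the index sets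
  have hjG : j ∉ G := by simp [hG]
  have hiG : i ∉ G := by simp [hG]
  have hFiG : Fi = insert j G := by
    ext t; simp only [hFi, hG, Finset.mem_filter, Finset.mem_univ, true_and,
      Finset.mem_insert]
    constructor
    · intro ht
      by_cases htj : t = j
      · exact Or.inl htj
      · exact Or.inr ⟨ht, htj⟩
    · rintro (rfl | ⟨h1, _⟩)
      · exact hij.symm
      · exact h1
  have hFjG : Fj = insert i G := by
    ext t; simp only [hFj, hG, Finset.mem_filter, Finset.mem_univ, true_and,
      Finset.mem_insert]
    constructor
    · intro ht
      by_cases hti : t = i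
      · exact Or.inl hti
      · exact Or.inr ⟨hti, ht⟩
    · rintro (rfl | ⟨_, h2⟩)
      · exact hij
      · exact h2
  -- vanishing of individual commutators
  have hcomm0 : ∀ k l, swap i k * swap j l = swap j l * swap i k → c k l = 0 := by
    intro k l h
    rw [hc]
    simp only [Sc_comm ρ i k j l h, sub_self, smul_zero]
  have hcji : c j i = 0 := hcomm0 j i (by rw [Equiv.swap_comm i j])
  have hcdisj : ∀ k l, k ∈ G → l ∈ G → k ≠ l → c k l = 0 := by
    intro k l hk hl hkl
    simp only [hG, Finset.mem_filter, Finset.mem_univ, true_and] at hk hl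
    exact hcomm0 k l (swap_disj_comm hij (Ne.symm hl.1) hk.2 hkl)
  -- inner sums
  have hinner_j : ∑ l ∈ Fj, c j l = ∑ t ∈ G, c j t := by
    rw [hFjG, Finset.sum_insert hiG, hcji, zero_add]
  have hinner : ∀ k ∈ G, ∑ l ∈ Fj, c k l = c k i + c k k := by
    intro k hk
    have hki : k ≠ i := by simp only [hG, Finset.mem_filter] at hk; exact hk.2.1
    rw [hFjG, Finset.sum_insert hiG]
    congr 1
    rw [Finset.sum_eq_single_of_mem k hk]
    intro l hl hlk
    exact hcdisj k l hk hl (Ne.symm hlk)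
  -- rewrite outer sum
  rw [hFiG, Finset.sum_insert hjG, hinner_j, Finset.sum_congr rfl hinner,
    Finset.sum_add_distrib, ← add_assoc, ← Finset.sum_add_distrib, ← Finset.sum_add_distrib]
  refine Finset.sum_eq_zero fun t ht => ?_
  simp only [hG, Finset.mem_filter, Finset.mem_univ, true_and] at ht
  obtain ⟨hti, htj⟩ := ht
  have hit : i ≠ t := Ne.symm hti
  have hjt : j ≠ t := Ne.symm htj
  have f2 : swap i j * swap i t = swap j t * swap i j := by
    have h := swap_shift hti htj
    rwa [Equiv.swap_comm t i] at h
  have f1 : swap i t * swap i j = swap i j * swap j t := by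
    have h := swap_shift htj hti
    rw [Equiv.swap_comm j i, Equiv.swap_comm t j] at h
    exact h.symm
  have f4 : swap j t * swap i t = swap i j * swap j t := by
    have h := swap_shift hit hij
    rwa [Equiv.swap_comm t j, Equiv.swap_comm j i] at h
  have f3 : swap i t * swap j t = swap j t * swap i j := by
    have h := swap_shift hjt hij.symm
    rw [Equiv.swap_comm t i] at h
    rw [h, f2]
  have e1 : c j t = ((z i - z j)⁻¹ * (z j - z t)⁻¹) •
      (ρ (swap i j * swap j t) w - ρ (swap j t * swap i j) w) := by
    rw [hc]; dsimp only; rw [Sc_comp_sub]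
  have e2 : c t i = ((z i - z t)⁻¹ * (z j - z i)⁻¹) •
      (ρ (swap i j * swap j t) w - ρ (swap j t * swap i j) w) := by
    rw [hc]; dsimp only; rw [Sc_comp_sub, Equiv.swap_comm j i, f1, f2]
  have e3 : c t t = (-((z i - z t)⁻¹ * (z j - z t)⁻¹)) •
      (ρ (swap i j * swap j t) w - ρ (swap j t * swap i j) w) := by
    rw [hc]; dsimp only; rw [Sc_comp_sub, f3, f4, neg_smul, ← smul_neg, neg_sub]
  rw [e1, e2, e3, ← add_smul, ← add_smul]
  have hscal : (z i - z j)⁻¹ * (z j - z t)⁻¹ + (z i - z t)⁻¹ * (z j - z i)⁻¹ +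
      -((z i - z t)⁻¹ * (z j - z t)⁻¹) = 0 := by
    have h1 : z i - z j ≠ 0 := sub_ne_zero.mpr (hz i j hij)
    have h2 : z i - z t ≠ 0 := sub_ne_zero.mpr (hz i t hit)
    have h3 : z j - z t ≠ 0 := sub_ne_zero.mpr (hz j t hjt)
    have h4 : z j - z i ≠ 0 := sub_ne_zero.mpr (hz j i hij.symm)
    field_simp
    ring
  rw [hscal, zero_smul]


lemma KZKZ (m : ℂ) (ψ : (Fin N → ℂ) → W) (z : Fin N → ℂ)
    (hψ2 : ContDiffAt ℂ 2 ψ z) (hzC : ∀ a b : Fin N, a ≠ b → z a ≠ z b)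
    (i j : Fin N) (hij : i ≠ j) :
    KZop (fun g w => ρ g w) m i (KZop (fun g w => ρ g w) m j ψ) z =
      fderiv ℂ (fderiv ℂ ψ) z (Pi.single i 1) (Pi.single j 1)
      - m • (∑ k ∈ univ.filter (fun t : Fin N => t ≠ j),
          (z j - z k)⁻¹ • Sc ρ j k (fderiv ℂ ψ z (Pi.single i 1)))
      - m • (((z j - z i)⁻¹ * (z j - z i)⁻¹) • Sc ρ j i (ψ z))
      - m • (∑ k ∈ univ.filter (fun t : Fin N => t ≠ i),
          (z i - z k)⁻¹ • Sc ρ i k (fderiv ℂ ψ z (Pi.single j 1)))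
      + (m * m) • ∑ k ∈ univ.filter (fun t : Fin N => t ≠ i),
          ∑ l ∈ univ.filter (fun t : Fin N => t ≠ j),
          ((z i - z k)⁻¹ * (z j - z l)⁻¹) • Sc ρ i k (Sc ρ j l (ψ z)) := by
  classical
  have hψd : DifferentiableAt ℂ ψ z := hψ2.differentiableAt two_ne_zero
  have hfd : DifferentiableAt ℂ (fderiv ℂ ψ) z :=
    (hψ2.fderiv_right (m := 1) (by norm_num)).differentiableAt one_ne_zero
  set f2 := fderiv ℂ (fderiv ℂ ψ) z with hf2def
  set ψ' := fderiv ℂ ψ z with hψ'def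
  set Fj := univ.filter (fun t : Fin N => t ≠ j) with hFj
  set Fi := univ.filter (fun t : Fin N => t ≠ i) with hFi
  set Dk : Fin N → (Fin N → ℂ) →L[ℂ] W := fun k =>
    (z j - z k)⁻¹ • ((Sc ρ j k).comp ψ') +
      ((-(ContinuousLinearMap.mulLeftRight ℂ ℂ (z j - z k)⁻¹ (z j - z k)⁻¹)).comp
        ((ContinuousLinearMap.proj j : (Fin N → ℂ) →L[ℂ] ℂ) -
          ContinuousLinearMap.proj k)).smulRight (Sc ρ j k (ψ z)) with hDkdef
  -- derivative of each summand of the inner KZ operator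
  have hDkd : ∀ k ∈ Fj,
      HasFDerivAt (fun w => (w j - w k)⁻¹ • Sc ρ j k (ψ w)) (Dk k) z := by
    intro k hk
    rw [hFj, Finset.mem_filter] at hk
    have h0k : z j - z k ≠ 0 := sub_ne_zero.mpr (hzC j k (Ne.symm hk.2))
    have hL : HasFDerivAt (fun w : Fin N → ℂ => w j - w k)
        ((ContinuousLinearMap.proj j : (Fin N → ℂ) →L[ℂ] ℂ) - ContinuousLinearMap.proj k) z :=
      (hasFDerivAt_apply j z).sub (hasFDerivAt_apply k z)
    have hinv : HasFDerivAt (fun w : Fin N → ℂ => (w j - w k)⁻¹)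
        ((-(ContinuousLinearMap.mulLeftRight ℂ ℂ (z j - z k)⁻¹ (z j - z k)⁻¹)).comp
          ((ContinuousLinearMap.proj j : (Fin N → ℂ) →L[ℂ] ℂ) -
            ContinuousLinearMap.proj k)) z := (hasFDerivAt_inv' h0k).comp z hL
    have hSd : HasFDerivAt (fun w => Sc ρ j k (ψ w)) ((Sc ρ j k).comp ψ') z :=
      (Sc ρ j k).hasFDerivAt.comp z hψd.hasFDerivAt
    exact hinv.smul hSd
  -- derivative of the inner KZ operator
  have hKj : HasFDerivAt (KZop (fun g w => ρ g w) m j ψ)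
      (f2.flip (Pi.single j 1) - m • ∑ k ∈ Fj, Dk k) z := by
    have hg1 : HasFDerivAt (fun w => fderiv ℂ ψ w (Pi.single j 1))
        (f2.flip (Pi.single j 1)) z := by
      have h := hfd.hasFDerivAt.clm_apply (hasFDerivAt_const (Pi.single j (1:ℂ)) z)
      simpa using h
    have hsum := HasFDerivAt.sum hDkd
    have h := hg1.sub (hsum.const_smul m)
    have hfun : KZop (fun g w => ρ g w) m j ψ = fun w =>
        fderiv ℂ ψ w (Pi.single j 1) - m • ∑ k ∈ Fj, (w j - w k)⁻¹ • Sc ρ j k (ψ w) := by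
      funext w
      simp only [KZop, Sc_apply, hFj]
    rw [hfun]
    refine h.congr_of_eventuallyEq (Filter.Eventually.of_forall fun w => ?_)
    simp [Finset.sum_apply]
  -- value of the derivative of each summand at the direction e_i
  have hiFj : i ∈ Fj := by simp [hFj, hij]
  have hDkapp : ∀ k ∈ Fj, (Dk k) (Pi.single i 1) =
      (z j - z k)⁻¹ • Sc ρ j k (ψ' (Pi.single i 1)) +
        (if k = i then ((z j - z i)⁻¹ * (z j - z i)⁻¹) • Sc ρ j i (ψ z) else 0) := by
    intro k hk
    rw [hDkdef]
    simp only [ContinuousLinearMap.add_apply, ContinuousLinearMap.coe_smul', Pi.smul_apply,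
      ContinuousLinearMap.coe_comp', Function.comp_apply, ContinuousLinearMap.smulRight_apply,
      ContinuousLinearMap.neg_apply, ContinuousLinearMap.mulLeftRight_apply,
      ContinuousLinearMap.sub_apply, ContinuousLinearMap.proj_apply,
      Pi.single_eq_of_ne (Ne.symm hij)]
    by_cases hki : k = i
    · subst hki
      rw [if_pos rfl, Pi.single_eq_same]
      congr 1
      rw [show -((z j - z k)⁻¹ * (0 - 1) * (z j - z k)⁻¹) =
        (z j - z k)⁻¹ * (z j - z k)⁻¹ by ring]
    · rw [if_neg hki, Pi.single_eq_of_ne hki]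
      rw [show -((z j - z k)⁻¹ * ((0:ℂ) - 0) * (z j - z k)⁻¹) = 0 by ring, zero_smul, add_zero]
  -- value of the derivative of the sum at e_i
  have hsumDk : (∑ k ∈ Fj, Dk k) (Pi.single i 1) =
      (∑ k ∈ Fj, (z j - z k)⁻¹ • Sc ρ j k (ψ' (Pi.single i 1)))
        + ((z j - z i)⁻¹ * (z j - z i)⁻¹) • Sc ρ j i (ψ z) := by
    rw [ContinuousLinearMap.sum_apply, Finset.sum_congr rfl hDkapp, Finset.sum_add_distrib,
      Finset.sum_ite_eq' Fj i (fun _ => ((z j - z i)⁻¹ * (z j - z i)⁻¹) • Sc ρ j i (ψ z)),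
      if_pos hiFj]
  -- unfold the outer KZ operator
  have houter : ∀ Φ : (Fin N → ℂ) → W, KZop (fun g w => ρ g w) m i Φ z =
      fderiv ℂ Φ z (Pi.single i 1) - m • ∑ k ∈ Fi, (z i - z k)⁻¹ • Sc ρ i k (Φ z) := by
    intro Φ
    simp only [KZop, Sc_apply, hFi]
  -- value of the inner KZ operator
  have hKjz : KZop (fun g w => ρ g w) m j ψ z =
      ψ' (Pi.single j 1) - m • ∑ l ∈ Fj, (z j - z l)⁻¹ • Sc ρ j l (ψ z) := by
    simp only [KZop, Sc_apply, hFj, hψ'def]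
  have hScK : ∀ k : Fin N, Sc ρ i k (KZop (fun g w => ρ g w) m j ψ z) =
      Sc ρ i k (ψ' (Pi.single j 1))
        - m • ∑ l ∈ Fj, (z j - z l)⁻¹ • Sc ρ i k (Sc ρ j l (ψ z)) := by
    intro k
    rw [hKjz, map_sub, map_smul, map_sum]
    congr 1
    congr 1
    exact Finset.sum_congr rfl fun l _ => by rw [map_smul]
  have hsum2 : ∑ k ∈ Fi, (z i - z k)⁻¹ • Sc ρ i k (KZop (fun g w => ρ g w) m j ψ z)
      = (∑ k ∈ Fi, (z i - z k)⁻¹ • Sc ρ i k (ψ' (Pi.single j 1)))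
        - m • ∑ k ∈ Fi, ∑ l ∈ Fj,
            ((z i - z k)⁻¹ * (z j - z l)⁻¹) • Sc ρ i k (Sc ρ j l (ψ z)) := by
    calc ∑ k ∈ Fi, (z i - z k)⁻¹ • Sc ρ i k (KZop (fun g w => ρ g w) m j ψ z)
        = ∑ k ∈ Fi, ((z i - z k)⁻¹ • Sc ρ i k (ψ' (Pi.single j 1))
            - m • ∑ l ∈ Fj, ((z i - z k)⁻¹ * (z j - z l)⁻¹) • Sc ρ i k (Sc ρ j l (ψ z))) := by
          refine Finset.sum_congr rfl fun k _ => ?_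
          rw [hScK k, smul_sub]
          congr 1
          rw [smul_comm ((z i - z k)⁻¹) m, Finset.smul_sum]
          congr 1
          exact Finset.sum_congr rfl fun l _ => by rw [smul_smul]
      _ = _ := by rw [Finset.sum_sub_distrib, ← Finset.smul_sum]
  rw [houter, hKj.fderiv, ContinuousLinearMap.sub_apply, ContinuousLinearMap.coe_smul',
    Pi.smul_apply, ContinuousLinearMap.flip_apply, hsumDk, hsum2]
  rw [smul_add, smul_sub, smul_smul m m]
  abel


end KZAux

/-- the KZ operators commute on twice continuously differentiable
functions: `D_i(D_jψ) = D_j(D_iψ)` on `U`. -/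
theorem stmt_2 {N : ℕ} (hN : 2 ≤ N) {W : Type*} [NormedAddCommGroup W]
    [NormedSpace ℂ W] [FiniteDimensional ℂ W]
    (ρ : Representation ℂ (Equiv.Perm (Fin N)) W) (m : ℂ)
    (U : Set (Fin N → ℂ)) (hUopen : IsOpen U) (hU : U ⊆ Cconf N)
    (ψ : (Fin N → ℂ) → W) (hψ : ContDiffOn ℂ 2 ψ U) :
    ∀ z ∈ U, ∀ i j : Fin N,
      KZop (fun g w => ρ g w) m i (KZop (fun g w => ρ g w) m j ψ) z =
        KZop (fun g w => ρ g w) m j (KZop (fun g w => ρ g w) m i ψ) z := by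
  intro z hz i j
  by_cases hij : i = j
  · subst hij; rfl
  · have hzC : ∀ a b : Fin N, a ≠ b → z a ≠ z b := fun a b hab => hU hz a b hab
    have hψ2 : ContDiffAt ℂ 2 ψ z := hψ.contDiffAt (hUopen.mem_nhds hz)
    rw [KZKZ ρ m ψ z hψ2 hzC i j hij, KZKZ ρ m ψ z hψ2 hzC j i (Ne.symm hij)]
    have h1 : fderiv ℂ (fderiv ℂ ψ) z (Pi.single i 1) (Pi.single j 1)
        = fderiv ℂ (fderiv ℂ ψ) z (Pi.single j 1) (Pi.single i 1) :=
      (hψ2.isSymmSndFDerivAt (by simp [minSmoothness_of_isRCLikeNormedField])) _ _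
    have h3 : ((z j - z i)⁻¹ * (z j - z i)⁻¹) • Sc ρ j i (ψ z)
        = ((z i - z j)⁻¹ * (z i - z j)⁻¹) • Sc ρ i j (ψ z) := by
      rw [Sc_symm ρ j i]
      congr 1
      rw [show z j - z i = -(z i - z j) by ring, inv_neg, neg_mul_neg]
    have h5 := key ρ z hzC i j hij (ψ z)
    rw [h1, h3, h5]
    abel
end
end

section
/- Let m be an integer and let ψ : U → W be a solution of the KZ equation with values in W and parameter m on an open set U ⊆ C_N. Equip W with the sign-twisted S_N-action (the tensor product with the alternating representation), in which the transposition (i j) acts by −s_{ij}. Then the function φ(z) = ∏_{1≤i<j≤N}(z_i−z_j)^{−2m} ψ(z) is a solution of the KZ equation with values in the sign-twisted module and parameter −m on U. -/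
open scoped BigOperators

noncomputable section


theorem key_sum {N : ℕ} (z : Fin N → ℂ) (i : Fin N) :
    ∑ p ∈ Finset.univ.filter (fun p : Fin N × Fin N => p.1 < p.2),
      (z p.1 - z p.2)⁻¹ * ((Pi.single i 1 : Fin N → ℂ) p.1 - (Pi.single i 1 : Fin N → ℂ) p.2)
    = ∑ j ∈ Finset.univ.filter (fun j => j ≠ i), (z i - z j)⁻¹ := by
  classical
  rw [← Finset.sum_filter_of_ne
    (p := fun p : Fin N × Fin N => p.1 = i ∨ p.2 = i)
    (by
      intro p _ hne
      by_contra hc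
      push_neg at hc
      simp [Pi.single_apply, hc.1, hc.2] at hne)]
  refine Finset.sum_nbij' (fun p => if p.1 = i then p.2 else p.1)
    (fun j => if i < j then (i, j) else (j, i)) ?_ ?_ ?_ ?_ ?_
  · intro p hp
    simp only [Finset.mem_filter, Finset.mem_univ, true_and] at hp ⊢
    obtain ⟨hlt, hor⟩ := hp
    rcases hor with h1 | h2
    · subst h1; rw [if_pos rfl]; exact (ne_of_gt hlt)
    · subst h2; rw [if_neg (ne_of_lt hlt)]; exact (ne_of_lt hlt)
  · intro j hj
    simp only [Finset.mem_filter, Finset.mem_univ, true_and] at hj ⊢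
    rcases lt_or_gt_of_ne (Ne.symm hj) with hlt | hgt
    · rw [if_pos hlt]; exact ⟨hlt, Or.inl rfl⟩
    · rw [if_neg (not_lt.2 hgt.le)]; exact ⟨hgt, Or.inr rfl⟩
  · intro p hp
    simp only [Finset.mem_filter, Finset.mem_univ, true_and] at hp
    obtain ⟨hlt, hor⟩ := hp
    rcases hor with h1 | h2
    · subst h1; rw [if_pos rfl, if_pos hlt]
    · subst h2; rw [if_neg (ne_of_lt hlt), if_neg (asymm hlt)]
  · intro j hj
    simp only [Finset.mem_filter, Finset.mem_univ, true_and] at hj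
    rcases lt_or_gt_of_ne (Ne.symm hj) with hlt | hgt
    · rw [if_pos hlt]; dsimp only; rw [if_pos rfl]
    · rw [if_neg (not_lt.2 hgt.le)]; dsimp only; rw [if_neg hj]
  · intro p hp
    simp only [Finset.mem_filter, Finset.mem_univ, true_and] at hp
    obtain ⟨hlt, hor⟩ := hp
    rcases hor with h1 | h2
    · subst h1; rw [if_pos rfl]
      simp [Pi.single_apply, (ne_of_gt hlt : p.2 ≠ p.1)]
    · subst h2
      rw [if_neg (ne_of_lt hlt)]
      rw [show z p.2 - z p.1 = -(z p.1 - z p.2) by ring, inv_neg]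
      simp [Pi.single_apply, (ne_of_lt hlt : p.1 ≠ p.2)]



theorem hasFDerivAt_P {N : ℕ} (k : ℤ) (z : Fin N → ℂ)
    (hz : ∀ i j : Fin N, i ≠ j → z i ≠ z j) :
    HasFDerivAt (fun w : Fin N → ℂ =>
        ∏ p ∈ Finset.univ.filter (fun p : Fin N × Fin N => p.1 < p.2), (w p.1 - w p.2) ^ k)
      (∑ p ∈ Finset.univ.filter (fun p : Fin N × Fin N => p.1 < p.2),
        (∏ q ∈ (Finset.univ.filter (fun p : Fin N × Fin N => p.1 < p.2)).erase p,
          (z q.1 - z q.2) ^ k) •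
        (((k : ℂ) * (z p.1 - z p.2) ^ (k - 1)) •
          ((ContinuousLinearMap.proj p.1 : (Fin N → ℂ) →L[ℂ] ℂ) -
            ContinuousLinearMap.proj p.2))) z := by
  apply HasFDerivAt.finset_prod
  intro p hp
  simp only [Finset.mem_filter, Finset.mem_univ, true_and] at hp
  have hne : z p.1 - z p.2 ≠ 0 := sub_ne_zero.mpr (hz p.1 p.2 (ne_of_lt hp))
  have h1 : HasFDerivAt (fun w : Fin N → ℂ => w p.1 - w p.2)
      ((ContinuousLinearMap.proj p.1 : (Fin N → ℂ) →L[ℂ] ℂ) - ContinuousLinearMap.proj p.2) z :=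
    ((ContinuousLinearMap.proj p.1 : (Fin N → ℂ) →L[ℂ] ℂ) -
      ContinuousLinearMap.proj p.2).hasFDerivAt
  exact (hasDerivAt_zpow k (z p.1 - z p.2) (Or.inl hne)).comp_hasFDerivAt z h1



/-- if `ψ` solves the KZ equation with values in `W` and integer
parameter `m`, then `φ(z) = ∏_{i<j}(z_i−z_j)^{−2m} ψ(z)` solves the KZ equation
with values in the sign-twisted module (where `(i j)` acts by `−s_{ij}`, i.e.
`g` acts by `sign(g)·ρ(g)`) and parameter `−m`. -/
theorem stmt_3 {N : ℕ} (hN : 2 ≤ N) {W : Type*} [NormedAddCommGroup W]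
    [NormedSpace ℂ W] [FiniteDimensional ℂ W]
    (ρ : Representation ℂ (Equiv.Perm (Fin N)) W) (m : ℤ)
    (U : Set (Fin N → ℂ)) (hUopen : IsOpen U) (hU : U ⊆ Cconf N)
    (ψ : (Fin N → ℂ) → W)
    (h : IsKZSol (fun g w => ρ g w) (m : ℂ) U ψ) :
    IsKZSol (fun g w => ((Equiv.Perm.sign g : ℤ) : ℂ) • ρ g w) (-(m : ℂ)) U
      (fun z =>
        (∏ p ∈ Finset.univ.filter (fun p : Fin N × Fin N => p.1 < p.2),
          (z p.1 - z p.2) ^ (-(2 * m))) • ψ z) := by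
  classical
  obtain ⟨hdiff, heqn⟩ := h
  set k : ℤ := -(2 * m) with hk
  set S := Finset.univ.filter (fun p : Fin N × Fin N => p.1 < p.2) with hSdef
  set P : (Fin N → ℂ) → ℂ := fun w => ∏ p ∈ S, (w p.1 - w p.2) ^ k with hPdef
  have hψd : ∀ z ∈ U, HasFDerivAt ψ (fderiv ℂ ψ z) z := fun z hz =>
    (hdiff.differentiableAt (hUopen.mem_nhds hz)).hasFDerivAt
  have hPd : ∀ z ∈ U, HasFDerivAt P
      (∑ p ∈ S, (∏ q ∈ S.erase p, (z q.1 - z q.2) ^ k) •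
        (((k : ℂ) * (z p.1 - z p.2) ^ (k - 1)) •
          ((ContinuousLinearMap.proj p.1 : (Fin N → ℂ) →L[ℂ] ℂ) -
            ContinuousLinearMap.proj p.2))) z := fun z hz =>
    hasFDerivAt_P k z (hU hz)
  have hφd : ∀ z ∈ U, HasFDerivAt (fun z => P z • ψ z)
      (P z • fderiv ℂ ψ z +
        (∑ p ∈ S, (∏ q ∈ S.erase p, (z q.1 - z q.2) ^ k) •
          (((k : ℂ) * (z p.1 - z p.2) ^ (k - 1)) •
            ((ContinuousLinearMap.proj p.1 : (Fin N → ℂ) →L[ℂ] ℂ) -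
              ContinuousLinearMap.proj p.2))).smulRight (ψ z)) z := fun z hz =>
    (hPd z hz).smul (hψd z hz)
  constructor
  · exact fun z hz => ((hφd z hz).differentiableAt).differentiableWithinAt
  · intro z hz i
    rw [(hφd z hz).fderiv]
    -- evaluate the derivative at the basis vector
    rw [ContinuousLinearMap.add_apply, ContinuousLinearMap.smul_apply,
      ContinuousLinearMap.smulRight_apply, ContinuousLinearMap.sum_apply]
    simp only [ContinuousLinearMap.smul_apply, ContinuousLinearMap.sub_apply,
      ContinuousLinearMap.proj_apply, smul_eq_mul]
    have hval : ∀ p ∈ S, (∏ q ∈ S.erase p, (z q.1 - z q.2) ^ k) *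
        ((k : ℂ) * (z p.1 - z p.2) ^ (k - 1) *
          ((Pi.single i 1 : Fin N → ℂ) p.1 - (Pi.single i 1 : Fin N → ℂ) p.2)) =
        ((k : ℂ) * P z) * ((z p.1 - z p.2)⁻¹ *
          ((Pi.single i 1 : Fin N → ℂ) p.1 - (Pi.single i 1 : Fin N → ℂ) p.2)) := by
      intro p hp
      have hplt : p.1 < p.2 := (Finset.mem_filter.1 hp).2
      have hx : z p.1 - z p.2 ≠ 0 := sub_ne_zero.mpr (hU hz p.1 p.2 (ne_of_lt hplt))
      have hxk : (z p.1 - z p.2) ^ k ≠ 0 := zpow_ne_zero _ hx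
      have hprod : (∏ q ∈ S.erase p, (z q.1 - z q.2) ^ k) = P z / (z p.1 - z p.2) ^ k := by
        rw [eq_div_iff hxk]
        exact Finset.prod_erase_mul S _ hp
      rw [hprod, zpow_sub_one₀ hx]
      field_simp
    rw [Finset.sum_congr rfl hval, ← Finset.mul_sum, key_sum z i, heqn z hz i]
    rw [smul_smul, Finset.smul_sum, Finset.smul_sum, Finset.mul_sum, Finset.sum_smul,
      ← Finset.sum_add_distrib]
    apply Finset.sum_congr rfl
    intro j hj
    have hji : j ≠ i := (Finset.mem_filter.1 hj).2
    have hsgn : Equiv.Perm.sign (Equiv.swap i j) = -1 := Equiv.Perm.sign_swap (Ne.symm hji)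
    dsimp only
    rw [hsgn, map_smul]
    push_cast [hk]
    module
end
end

section
/- Let U ⊆ C_N be a connected open set, let ψ : U → W be a solution of the KZ equation with values in W and parameter m, and let φ : U → W* be a solution of the KZ equation with values in the dual representation W* (where g ∈ S_N acts on ξ ∈ W* by (g·ξ)(w) = ξ(g^{-1}·w)) and parameter −m. Then the function z ↦ φ(z)(ψ(z)) is constant on U. -/
open scoped BigOperators

noncomputable section

/-- if `ψ` solves the KZ equation with values in `W` and parameter
`m` on a connected open `U ⊆ C_N`, and `φ` solves the KZ equation with values in
the dual representation `W*` (where `g` acts on `ξ` by `ξ ∘ ρ(g⁻¹)`) and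
parameter `−m`, then `z ↦ φ(z)(ψ(z))` is constant on `U`. -/
theorem stmt_4 {N : ℕ} (hN : 2 ≤ N) {W : Type*} [NormedAddCommGroup W]
    [NormedSpace ℂ W] [FiniteDimensional ℂ W]
    (ρ : Representation ℂ (Equiv.Perm (Fin N)) W) (m : ℂ)
    (U : Set (Fin N → ℂ)) (hUopen : IsOpen U) (hUconn : IsConnected U)
    (hU : U ⊆ Cconf N)
    (ψ : (Fin N → ℂ) → W) (φ : (Fin N → ℂ) → (W →L[ℂ] ℂ))
    (hψ : IsKZSol (fun g w => ρ g w) m U ψ)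
    (hφ : IsKZSol
      (fun g ξ => ξ.comp (LinearMap.toContinuousLinearMap (ρ g⁻¹))) (-m) U φ) :
    ∀ z ∈ U, ∀ z' ∈ U, φ z (ψ z) = φ z' (ψ z') := by
  set f : (Fin N → ℂ) → ℂ := fun z => φ z (ψ z) with hf
  -- differentiability and vanishing derivative at each point of U
  have hkey : ∀ z ∈ U, DifferentiableAt ℂ f z ∧ fderiv ℂ f z = 0 := by
    intro z hz
    have hzU : U ∈ nhds z := hUopen.mem_nhds hz
    have hψd : DifferentiableAt ℂ ψ z := (hψ.1.differentiableAt hzU)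
    have hφd : DifferentiableAt ℂ φ z := (hφ.1.differentiableAt hzU)
    have hfd : DifferentiableAt ℂ f z := hφd.clm_apply hψd
    refine ⟨hfd, ?_⟩
    have hfder := fderiv_clm_apply hφd hψd
    have hzero : ∀ i : Fin N, fderiv ℂ f z (Pi.single i 1) = 0 := by
      intro i
      rw [hf]
      rw [hfder]
      simp only [ContinuousLinearMap.add_apply, ContinuousLinearMap.coe_comp',
        Function.comp_apply, ContinuousLinearMap.flip_apply]
      rw [hψ.2 z hz i, hφ.2 z hz i]
      simp only [ContinuousLinearMap.map_smul, map_sum, ContinuousLinearMap.sum_apply,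
        ContinuousLinearMap.smul_apply, ContinuousLinearMap.map_add,
        ContinuousLinearMap.add_apply, ContinuousLinearMap.coe_comp',
        Function.comp_apply, LinearMap.coe_toContinuousLinearMap', smul_eq_mul,
        ContinuousLinearMap.neg_apply, neg_smul, Equiv.swap_inv]
      ring
    have hL : (fderiv ℂ f z : (Fin N → ℂ) →ₗ[ℂ] ℂ) = 0 := by
      apply (Pi.basisFun ℂ (Fin N)).ext
      intro i
      simpa using hzero i
    exact ContinuousLinearMap.coe_injective (by simpa using hL)
  -- local constancy
  have hloc : ∀ z ∈ U, ∃ ε > 0, Metric.ball z ε ⊆ U ∧ ∀ w ∈ Metric.ball z ε, f w = f z := by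
    intro z hz
    obtain ⟨ε, hε, hball⟩ := Metric.isOpen_iff.1 hUopen z hz
    refine ⟨ε, hε, hball, fun w hw => ?_⟩
    have hconv : Convex ℝ (Metric.ball z ε) := convex_ball z ε
    refine hconv.is_const_of_fderivWithin_eq_zero (fun y hy => ((hkey y (hball hy)).1).differentiableWithinAt) ?_ hw (Metric.mem_ball_self hε)
    intro y hy
    rw [fderivWithin_of_isOpen Metric.isOpen_ball hy]
    exact (hkey y (hball hy)).2
  -- connectedness argument
  intro z hz z' hz'
  set c := f z with hc
  set S : Set (Fin N → ℂ) := ⋃ (y : {y // y ∈ U ∧ f y = c}), Metric.ball y.1 (Classical.choose (hloc y.1 y.2.1))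
  set T : Set (Fin N → ℂ) := ⋃ (y : {y // y ∈ U ∧ f y ≠ c}), Metric.ball y.1 (Classical.choose (hloc y.1 y.2.1))
  have hSconst : ∀ w ∈ S, w ∈ U ∧ f w = c := by
    intro w hw
    obtain ⟨y, hwy⟩ := Set.mem_iUnion.1 hw
    obtain ⟨hε, hball, hconst⟩ := Classical.choose_spec (hloc y.1 y.2.1)
    exact ⟨hball hwy, (hconst w hwy).trans y.2.2⟩
  have hTconst : ∀ w ∈ T, w ∈ U ∧ f w ≠ c := by
    intro w hw
    obtain ⟨y, hwy⟩ := Set.mem_iUnion.1 hw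
    obtain ⟨hε, hball, hconst⟩ := Classical.choose_spec (hloc y.1 y.2.1)
    exact ⟨hball hwy, (hconst w hwy) ▸ y.2.2⟩
  have hSopen : IsOpen S := isOpen_iUnion fun y => Metric.isOpen_ball
  have hTopen : IsOpen T := isOpen_iUnion fun y => Metric.isOpen_ball
  have hdisj : Disjoint S T := by
    rw [Set.disjoint_left]
    intro w hwS hwT
    exact (hTconst w hwT).2 (hSconst w hwS).2
  have hcover : U ⊆ S ∪ T := by
    intro w hw
    by_cases hfw : f w = c
    · exact Or.inl (Set.mem_iUnion.2 ⟨⟨w, hw, hfw⟩, Metric.mem_ball_self (Classical.choose_spec (hloc w hw)).1⟩)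
    · exact Or.inr (Set.mem_iUnion.2 ⟨⟨w, hw, hfw⟩, Metric.mem_ball_self (Classical.choose_spec (hloc w hw)).1⟩)
  have hne : (U ∩ S).Nonempty := by
    refine ⟨z, hz, Set.mem_iUnion.2 ⟨⟨z, hz, rfl⟩, Metric.mem_ball_self (Classical.choose_spec (hloc z hz)).1⟩⟩
  have hsub : U ⊆ S := hUconn.isPreconnected.subset_left_of_subset_union hSopen hTopen hdisj hcover hne
  exact ((hSconst z' (hsub hz')).2).symm
end
end

section
/- Let ρ : S_N → GL_d(ℂ) be a representation, m an integer, and U ⊆ C_N a connected open set. Suppose Φ : U → M_d(ℂ) is differentiable, Φ(z) is invertible for every z ∈ U, and ∂Φ/∂z_i(z) = m Σ_{j≠i} (ρ(s_{ij}) + I)Φ(z)/(z_i−z_j) for all i. Let d_+ = dim ker(ρ((1 2)) − I) be the dimension of the fixed subspace of a transposition. Then there is a nonzero constant C ∈ ℂ such that det Φ(z) = C ∏_{1≤i<j≤N}(z_i−z_j)^{2 m d_+} for all z ∈ U. -/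
open scoped BigOperators
open Matrix

noncomputable section

namespace KZAux

open Finset Metric

/-! ### Auxiliary lemmas -/

/-- Row form of the determinant. -/
lemma det_row_form {d : ℕ} (M : Matrix (Fin d) (Fin d) ℂ) :
    M.det = ∑ σ : Equiv.Perm (Fin d), ((Equiv.Perm.sign σ : ℤ) : ℂ) * ∏ a, M a (σ a) := by
  rw [← Matrix.det_transpose, Matrix.det_apply']
  simp [Matrix.transpose_apply]

lemma jacobi_key {d : ℕ} (M B : Matrix (Fin d) (Fin d) ℂ) :
    ∑ σ : Equiv.Perm (Fin d), ((Equiv.Perm.sign σ : ℤ) : ℂ) *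
        ∑ k, (∏ a ∈ univ.erase k, M a (σ a)) * (B * M) k (σ k)
      = B.trace * M.det := by
  have h1 : ∀ (k : Fin d), ∑ σ : Equiv.Perm (Fin d), ((Equiv.Perm.sign σ : ℤ) : ℂ) *
      ((∏ a ∈ univ.erase k, M a (σ a)) * (B * M) k (σ k))
      = (M.updateRow k ((B * M) k)).det := by
    intro k
    rw [det_row_form]
    refine Finset.sum_congr rfl fun σ _ => ?_
    congr 1
    rw [← Finset.mul_prod_erase univ _ (Finset.mem_univ k)]
    rw [Matrix.updateRow_self]
    rw [mul_comm ((B*M) k (σ k))]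
    congr 1
    refine Finset.prod_congr rfl fun a ha => ?_
    rw [Matrix.updateRow_apply, if_neg (Finset.ne_of_mem_erase ha)]
  have h2 : ∀ (k : Fin d), (M.updateRow k ((B * M) k)).det = B k k * M.det := by
    intro k
    have : (B * M) k = ∑ s, B k s • M s := by
      ext j; simp [Matrix.mul_apply, Finset.sum_apply]
    rw [this]
    rw [Matrix.det_updateRow_sum]
    rw [smul_eq_mul]
  calc ∑ σ : Equiv.Perm (Fin d), ((Equiv.Perm.sign σ : ℤ) : ℂ) *
        ∑ k, (∏ a ∈ univ.erase k, M a (σ a)) * (B * M) k (σ k)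
      = ∑ k, ∑ σ : Equiv.Perm (Fin d), ((Equiv.Perm.sign σ : ℤ) : ℂ) *
        ((∏ a ∈ univ.erase k, M a (σ a)) * (B * M) k (σ k)) := by
        rw [Finset.sum_comm]
        simp [Finset.mul_sum]
  _ = ∑ k, B k k * M.det := by simp only [h1, h2]
  _ = B.trace * M.det := by rw [Matrix.trace, Finset.sum_mul]; rfl

lemma trace_invol {d : ℕ} (g : Matrix (Fin d) (Fin d) ℂ) (hg : g * g = 1) :
    Matrix.trace (g + 1) =
      2 * (Module.finrank ℂ (LinearMap.ker (Matrix.toLin' (g - 1))) : ℂ) := by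
  set f : (Fin d → ℂ) →ₗ[ℂ] (Fin d → ℂ) := Matrix.toLin' g with hf
  have hsub : Matrix.toLin' (g - 1) = f - LinearMap.id := by
    rw [map_sub, Matrix.toLin'_one, hf]
  have hff : ∀ x, f (f x) = x := by
    intro x
    have : (f ∘ₗ f) x = LinearMap.id (R := ℂ) (M := Fin d → ℂ) x := by
      rw [hf, ← Matrix.toLin'_mul, hg, Matrix.toLin'_one]
    simpa using this
  set p : (Fin d → ℂ) →ₗ[ℂ] (Fin d → ℂ) := (2⁻¹ : ℂ) • (LinearMap.id + f) with hp
  have hproj : LinearMap.IsProj (LinearMap.ker (Matrix.toLin' (g - 1))) p := by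
    constructor
    · intro x
      rw [LinearMap.mem_ker, hsub]
      have : f (p x) = p x := by
        have : p x = (2⁻¹:ℂ) • (x + f x) := by simp [hp]
        rw [this, _root_.map_smul, map_add (f := f), hff, add_comm]
      simp [this]
    · intro x hx
      rw [LinearMap.mem_ker, hsub] at hx
      have hfx : f x = x := by
        have := hx
        simp only [LinearMap.sub_apply, LinearMap.id_apply, sub_eq_zero] at this
        exact this
      simp only [hp, LinearMap.smul_apply, LinearMap.add_apply, LinearMap.id_apply, hfx]
      rw [← two_smul ℂ x, smul_smul]
      norm_num
  have htr := hproj.trace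
  have htrp : LinearMap.trace ℂ (Fin d → ℂ) p
      = 2⁻¹ * ((d : ℂ) + Matrix.trace g) := by
    have h1 : LinearMap.trace ℂ (Fin d → ℂ) f = Matrix.trace g := by
      rw [LinearMap.trace_eq_matrix_trace ℂ (Pi.basisFun ℂ (Fin d)),
        LinearMap.toMatrix_eq_toMatrix', hf, LinearMap.toMatrix'_toLin']
    rw [hp, _root_.map_smul, map_add, h1, LinearMap.trace_id]
    simp [Module.finrank_pi, smul_eq_mul]
  rw [htr] at htrp
  have : Matrix.trace (g + 1) = Matrix.trace g + (d : ℂ) := by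
    simp [Matrix.trace_add, Matrix.trace_one]
  rw [this]
  rw [eq_comm, inv_mul_eq_iff_eq_mul₀ (two_ne_zero)] at htrp
  rw [add_comm] at htrp
  rw [htrp]

lemma rho_swap_sq {N d : ℕ} (ρ : Equiv.Perm (Fin N) →* Matrix.GeneralLinearGroup (Fin d) ℂ)
    (i j : Fin N) :
    ((ρ (Equiv.swap i j) : Matrix (Fin d) (Fin d) ℂ)) *
      (ρ (Equiv.swap i j) : Matrix (Fin d) (Fin d) ℂ) = 1 := by
  have : ρ (Equiv.swap i j) * ρ (Equiv.swap i j) = 1 := by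
    rw [← _root_.map_mul, Equiv.swap_mul_self, _root_.map_one]
  calc ((ρ (Equiv.swap i j) : Matrix (Fin d) (Fin d) ℂ)) *
        (ρ (Equiv.swap i j) : Matrix (Fin d) (Fin d) ℂ)
      = ((ρ (Equiv.swap i j) * ρ (Equiv.swap i j) : Matrix.GeneralLinearGroup (Fin d) ℂ) :
          Matrix (Fin d) (Fin d) ℂ) := rfl
    _ = 1 := by rw [this]; rfl

lemma trace_rho_swap {N d : ℕ} (ρ : Equiv.Perm (Fin N) →* Matrix.GeneralLinearGroup (Fin d) ℂ)
    {i j k l : Fin N} (hij : i ≠ j) (hkl : k ≠ l) :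
    Matrix.trace ((ρ (Equiv.swap i j) : Matrix (Fin d) (Fin d) ℂ)) =
      Matrix.trace ((ρ (Equiv.swap k l) : Matrix (Fin d) (Fin d) ℂ)) := by
  obtain ⟨c, hc⟩ := Equiv.Perm.isConj_swap hij hkl
  have h : ρ c * ρ (Equiv.swap i j) = ρ (Equiv.swap k l) * ρ c := by
    rw [← _root_.map_mul, ← _root_.map_mul, hc.eq]
  have h2 : ρ (Equiv.swap k l) = ρ c * ρ (Equiv.swap i j) * (ρ c)⁻¹ := by
    rw [h]; group
  have h3 : (ρ (Equiv.swap k l) : Matrix (Fin d) (Fin d) ℂ)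
      = (ρ c : Matrix (Fin d) (Fin d) ℂ) * (ρ (Equiv.swap i j) : Matrix (Fin d) (Fin d) ℂ)
        * (((ρ c)⁻¹ : Matrix.GeneralLinearGroup (Fin d) ℂ) : Matrix (Fin d) (Fin d) ℂ) := by
    rw [h2]; rfl
  rw [h3, Matrix.trace_mul_cycle]
  have : (((ρ c)⁻¹ : Matrix.GeneralLinearGroup (Fin d) ℂ) : Matrix (Fin d) (Fin d) ℂ)
      * (ρ c : Matrix (Fin d) (Fin d) ℂ) = 1 := by
    calc _ = (((ρ c)⁻¹ * ρ c : Matrix.GeneralLinearGroup (Fin d) ℂ) :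
        Matrix (Fin d) (Fin d) ℂ) := rfl
    _ = 1 := by rw [inv_mul_cancel]; rfl
  rw [this, one_mul]

/-! ### The product function and its derivative -/

def Lp (N : ℕ) (p : Fin N × Fin N) : (Fin N → ℂ) →L[ℂ] ℂ :=
  (ContinuousLinearMap.proj p.1 : (Fin N → ℂ) →L[ℂ] ℂ) - ContinuousLinearMap.proj p.2

def Pfun (N : ℕ) (e : ℤ) (z : Fin N → ℂ) : ℂ :=
  ∏ p ∈ Finset.univ.filter (fun p : Fin N × Fin N => p.1 < p.2), (z p.1 - z p.2) ^ e

lemma Pfun_factor_hasFDerivAt {N : ℕ} (e : ℤ) (z : Fin N → ℂ) {p : Fin N × Fin N}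
    (hzp : z p.1 - z p.2 ≠ 0) :
    HasFDerivAt (fun z : Fin N → ℂ => (z p.1 - z p.2) ^ e)
      (((e : ℂ) * (z p.1 - z p.2) ^ (e - 1)) • Lp N p) z := by
  have hlin : HasFDerivAt (fun z : Fin N → ℂ => z p.1 - z p.2) (Lp N p) z :=
    ((ContinuousLinearMap.proj p.1 : (Fin N → ℂ) →L[ℂ] ℂ).hasFDerivAt).sub
      ((ContinuousLinearMap.proj p.2 : (Fin N → ℂ) →L[ℂ] ℂ).hasFDerivAt)
  exact (hasDerivAt_zpow e _ (Or.inl hzp)).comp_hasFDerivAt z hlin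

lemma Pfun_hasFDerivAt {N : ℕ} (e : ℤ) (z : Fin N → ℂ)
    (hz : ∀ i j : Fin N, i ≠ j → z i ≠ z j) :
    HasFDerivAt (Pfun N e)
      (∑ p ∈ Finset.univ.filter (fun p : Fin N × Fin N => p.1 < p.2),
        (∏ q ∈ (Finset.univ.filter (fun p : Fin N × Fin N => p.1 < p.2)).erase p,
          (z q.1 - z q.2) ^ e) •
        (((e : ℂ) * (z p.1 - z p.2) ^ (e - 1)) • Lp N p)) z := by
  refine HasFDerivAt.finset_prod fun p hp => ?_
  have hne : p.1 ≠ p.2 := by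
    have := (Finset.mem_filter.mp hp).2
    exact ne_of_lt this
  exact Pfun_factor_hasFDerivAt e z (sub_ne_zero.mpr (hz _ _ hne))

lemma Pfun_deriv_dir {N : ℕ} (e : ℤ) (z : Fin N → ℂ)
    (hz : ∀ i j : Fin N, i ≠ j → z i ≠ z j) (i : Fin N) :
    fderiv ℂ (Pfun N e) z (Pi.single i 1) =
      (∑ j ∈ univ.filter (fun j => j ≠ i), (e : ℂ) * (z i - z j)⁻¹) * Pfun N e z := by
  set Pairs : Finset (Fin N × Fin N) := Finset.univ.filter (fun p : Fin N × Fin N => p.1 < p.2)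
    with hPairs
  rw [(Pfun_hasFDerivAt e z hz).fderiv]
  rw [ContinuousLinearMap.sum_apply]
  have hterm : ∀ p ∈ Pairs,
      ((∏ q ∈ Pairs.erase p, (z q.1 - z q.2) ^ e) •
        (((e : ℂ) * (z p.1 - z p.2) ^ (e - 1)) • Lp N p)) (Pi.single i 1)
      = ((if p.1 = i then (1:ℂ) else 0) - (if p.2 = i then 1 else 0)) *
          ((e : ℂ) * (z p.1 - z p.2)⁻¹ * Pfun N e z) := by
    intro p hp
    have hne : p.1 ≠ p.2 := ne_of_lt (Finset.mem_filter.mp hp).2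
    have hzp : z p.1 - z p.2 ≠ 0 := sub_ne_zero.mpr (hz _ _ hne)
    have happ : Lp N p (Pi.single i 1)
        = (if p.1 = i then (1:ℂ) else 0) - (if p.2 = i then 1 else 0) := by
      simp [Lp, ContinuousLinearMap.proj_apply, Pi.single_apply]
    rw [ContinuousLinearMap.smul_apply, ContinuousLinearMap.smul_apply, happ]
    have hP : Pfun N e z = (z p.1 - z p.2) ^ e * ∏ q ∈ Pairs.erase p, (z q.1 - z q.2) ^ e :=
      (Finset.mul_prod_erase _ _ hp).symm
    rw [zpow_sub_one₀ hzp]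
    rw [smul_eq_mul, smul_eq_mul, hP]
    ring
  rw [Finset.sum_congr rfl hterm]
  rw [Finset.sum_mul]
  rw [← Finset.sum_filter_add_sum_filter_not Pairs (fun p => p.1 = i)]
  rw [← Finset.sum_filter_add_sum_filter_not (Pairs.filter (fun p => ¬ p.1 = i))
    (fun p => p.2 = i)]
  have h3 : ∑ p ∈ ((Pairs.filter (fun p => ¬ p.1 = i)).filter (fun p => ¬ p.2 = i)),
      ((if p.1 = i then (1:ℂ) else 0) - (if p.2 = i then 1 else 0)) *
        ((e : ℂ) * (z p.1 - z p.2)⁻¹ * Pfun N e z) = 0 := by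
    refine Finset.sum_eq_zero fun p hp => ?_
    rw [Finset.mem_filter] at hp
    have h1 := hp.2
    have h2 := (Finset.mem_filter.mp hp.1).2
    rw [if_neg h2, if_neg h1]
    ring
  rw [h3, add_zero]
  have hsplit : (univ.filter (fun j : Fin N => j ≠ i))
      = (univ.filter (fun j => i < j)) ∪ (univ.filter (fun j => j < i)) := by
    ext j
    simp only [Finset.mem_filter, Finset.mem_union, Finset.mem_univ, true_and]
    constructor
    · intro h; rcases lt_or_gt_of_ne h with h' | h'
      · right; exact h'
      · left; exact h'
    · rintro (h | h)
      · exact (ne_of_lt h).symm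
      · exact ne_of_lt h
  have hdisj : Disjoint (univ.filter (fun j : Fin N => i < j)) (univ.filter (fun j => j < i)) := by
    refine Finset.disjoint_left.mpr fun j hj1 hj2 => ?_
    rw [Finset.mem_filter] at hj1 hj2
    exact absurd (hj1.2.trans hj2.2) (lt_irrefl i)
  rw [hsplit, Finset.sum_union hdisj]
  congr 1
  · refine Finset.sum_nbij' (fun p => p.2) (fun j => (i, j)) ?_ ?_ ?_ ?_ ?_
    · intro p hp
      rw [Finset.mem_filter] at hp ⊢
      have h1 := hp.2
      have h2 := (Finset.mem_filter.mp hp.1).2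
      refine ⟨Finset.mem_univ _, ?_⟩
      rw [← h1]; exact h2
    · intro j hj
      rw [Finset.mem_filter] at hj ⊢
      exact ⟨Finset.mem_filter.mpr ⟨Finset.mem_univ _, hj.2⟩, rfl⟩
    · intro p hp
      rw [Finset.mem_filter] at hp
      have h1 := hp.2
      ext <;> simp [← h1]
    · intro j hj; rfl
    · intro p hp
      rw [Finset.mem_filter] at hp
      have h1 := hp.2
      rw [if_pos h1]
      have hne2 : ¬ p.2 = i := by
        have h2 := (Finset.mem_filter.mp hp.1).2
        intro hc; rw [h1, hc] at h2; exact lt_irrefl i h2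
      rw [if_neg hne2, h1]
      ring
  · refine Finset.sum_nbij' (fun p => p.1) (fun j => (j, i)) ?_ ?_ ?_ ?_ ?_
    · intro p hp
      rw [Finset.mem_filter] at hp ⊢
      have h1 := (Finset.mem_filter.mp hp.1).2
      have h2 := (Finset.mem_filter.mp (Finset.mem_filter.mp hp.1).1).2
      refine ⟨Finset.mem_univ _, ?_⟩
      rw [← hp.2]; exact h2
    · intro j hj
      rw [Finset.mem_filter] at hj ⊢
      refine ⟨Finset.mem_filter.mpr ⟨Finset.mem_filter.mpr ⟨Finset.mem_univ _, hj.2⟩, ?_⟩, rfl⟩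
      exact ne_of_lt hj.2
    · intro p hp
      rw [Finset.mem_filter] at hp
      ext <;> simp [← hp.2]
    · intro j hj; rfl
    · intro p hp
      rw [Finset.mem_filter] at hp
      have h1 := hp.2
      have hne1 : ¬ p.1 = i := (Finset.mem_filter.mp hp.1).2
      rw [if_neg hne1, if_pos h1, h1]
      rw [← neg_sub (z p.1) (z i), inv_neg]
      ring

lemma Pfun_ne_zero {N : ℕ} (e : ℤ) (z : Fin N → ℂ)
    (hz : ∀ i j : Fin N, i ≠ j → z i ≠ z j) : Pfun N e z ≠ 0 := by
  refine Finset.prod_ne_zero_iff.mpr fun p hp => ?_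
  exact zpow_ne_zero e (sub_ne_zero.mpr (hz _ _ (ne_of_lt (Finset.mem_filter.mp hp).2)))

/-! ### Determinant derivative lemmas -/

lemma det_diffAt {N d : ℕ} (Φ : (Fin N → ℂ) → Matrix (Fin d) (Fin d) ℂ) (z : Fin N → ℂ)
    (hdiff : ∀ a b : Fin d, DifferentiableAt ℂ (fun z => Φ z a b) z) :
    DifferentiableAt ℂ (fun z => (Φ z).det) z := by
  have : (fun z => (Φ z).det)
      = fun z => ∑ σ : Equiv.Perm (Fin d), ((Equiv.Perm.sign σ : ℤ) : ℂ) * ∏ a, Φ z a (σ a) := by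
    funext z; exact det_row_form (Φ z)
  rw [this]
  refine DifferentiableAt.fun_sum fun σ _ => ?_
  have hprod : DifferentiableAt ℂ (fun z => ∏ a, Φ z a (σ a)) z :=
    (HasFDerivAt.finset_prod (fun a (_ : a ∈ univ) =>
      (hdiff a (σ a)).hasFDerivAt)).differentiableAt
  exact hprod.const_mul _

lemma det_deriv_dir {N d : ℕ} (Φ : (Fin N → ℂ) → Matrix (Fin d) (Fin d) ℂ) (z v : Fin N → ℂ)
    (B : Matrix (Fin d) (Fin d) ℂ)
    (hdiff : ∀ a b : Fin d, DifferentiableAt ℂ (fun z => Φ z a b) z)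
    (hder : ∀ a b : Fin d, fderiv ℂ (fun z => Φ z a b) z v = (B * Φ z) a b) :
    fderiv ℂ (fun z => (Φ z).det) z v = B.trace * (Φ z).det := by
  have hrw : (fun z => (Φ z).det)
      = fun z => ∑ σ : Equiv.Perm (Fin d), ((Equiv.Perm.sign σ : ℤ) : ℂ) * ∏ a, Φ z a (σ a) := by
    funext z; exact det_row_form (Φ z)
  have hprod : ∀ σ : Equiv.Perm (Fin d), DifferentiableAt ℂ (fun z => ∏ a, Φ z a (σ a)) z := by
    intro σ
    exact (HasFDerivAt.finset_prod (fun a (_ : a ∈ univ) =>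
      (hdiff a (σ a)).hasFDerivAt)).differentiableAt
  have hA : ∀ σ ∈ (univ : Finset (Equiv.Perm (Fin d))),
      DifferentiableAt ℂ (fun z => ((Equiv.Perm.sign σ : ℤ) : ℂ) * ∏ a, Φ z a (σ a)) z :=
    fun σ _ => (hprod σ).const_mul _
  rw [hrw]
  rw [fderiv_fun_sum hA]
  rw [ContinuousLinearMap.sum_apply]
  have hterm : ∀ σ : Equiv.Perm (Fin d),
      fderiv ℂ (fun z => ((Equiv.Perm.sign σ : ℤ) : ℂ) * ∏ a, Φ z a (σ a)) z v
      = ((Equiv.Perm.sign σ : ℤ) : ℂ) *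
          ∑ k, (∏ a ∈ univ.erase k, Φ z a (σ a)) * (B * Φ z) k (σ k) := by
    intro σ
    rw [fderiv_const_mul (hprod σ)]
    rw [ContinuousLinearMap.smul_apply, smul_eq_mul]
    congr 1
    rw [fderiv_finset_prod (fun a _ => hdiff a (σ a))]
    rw [ContinuousLinearMap.sum_apply]
    refine Finset.sum_congr rfl fun k _ => ?_
    rw [ContinuousLinearMap.smul_apply, smul_eq_mul, hder k (σ k)]
  calc ∑ σ : Equiv.Perm (Fin d),
        fderiv ℂ (fun z => ((Equiv.Perm.sign σ : ℤ) : ℂ) * ∏ a, Φ z a (σ a)) z v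
      = ∑ σ : Equiv.Perm (Fin d), ((Equiv.Perm.sign σ : ℤ) : ℂ) *
          ∑ k, (∏ a ∈ univ.erase k, Φ z a (σ a)) * (B * Φ z) k (σ k) :=
        Finset.sum_congr rfl fun σ _ => hterm σ
  _ = B.trace * (Φ z).det := jacobi_key (Φ z) B

/-! ### Constancy -/

lemma const_of_fderiv_zero {E : Type*} [NormedAddCommGroup E] [NormedSpace ℂ E]
    {f : E → ℂ} {U : Set E} (hUopen : IsOpen U) (hconn : IsPreconnected U)
    (hdiff : ∀ z ∈ U, DifferentiableAt ℂ f z)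
    (hder : ∀ z ∈ U, fderiv ℂ f z = 0) {z₀ z : E} (h0 : z₀ ∈ U) (h : z ∈ U) :
    f z = f z₀ := by
  letI : NormedSpace ℝ E := NormedSpace.restrictScalars ℝ ℂ E
  have hloc : ∀ w ∈ U, ∃ ε > 0, ball w ε ⊆ U ∧ ∀ y ∈ ball w ε, f y = f w := by
    intro w hw
    obtain ⟨ε, hε, hball⟩ := Metric.isOpen_iff.mp hUopen w hw
    refine ⟨ε, hε, hball, fun y hy => ?_⟩
    refine Convex.is_const_of_fderivWithin_eq_zero (convex_ball w ε)
      (fun x hx => (hdiff x (hball hx)).differentiableWithinAt) ?_ hy (mem_ball_self hε)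
    intro x hx
    rw [fderivWithin_of_isOpen isOpen_ball hx]
    exact hder x (hball hx)
  set S : Set E := {w | w ∈ U ∧ f w = f z₀} with hS
  set T : Set E := {w | w ∈ U ∧ f w ≠ f z₀} with hT
  have hSopen : IsOpen S := by
    rw [Metric.isOpen_iff]
    rintro w ⟨hw, hfw⟩
    obtain ⟨ε, hε, hball, hconst⟩ := hloc w hw
    exact ⟨ε, hε, fun y hy => ⟨hball hy, (hconst y hy).trans hfw⟩⟩
  have hTopen : IsOpen T := by
    rw [Metric.isOpen_iff]
    rintro w ⟨hw, hfw⟩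
    obtain ⟨ε, hε, hball, hconst⟩ := hloc w hw
    exact ⟨ε, hε, fun y hy => ⟨hball hy, (hconst y hy).symm ▸ hfw⟩⟩
  by_contra hne
  have hz : z ∈ T := ⟨h, hne⟩
  have hcover : U ⊆ S ∪ T := by
    intro w hw
    by_cases hfw : f w = f z₀
    · exact Or.inl ⟨hw, hfw⟩
    · exact Or.inr ⟨hw, hfw⟩
  obtain ⟨w, hwU, hwS, hwT⟩ := hconn S T hSopen hTopen hcover ⟨z₀, h0, h0, rfl⟩ ⟨z, h, hz⟩
  exact hwT.2 hwS.2

end KZAux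

end

/-- an invertible fundamental matrix `Φ` of the KZ system with
integer parameter `m` on a connected open `U ⊆ C_N` has determinant
`det Φ(z) = C ∏_{i<j}(z_i−z_j)^{2 m d₊}` for some nonzero constant `C`,
where `d₊` is the dimension of the fixed subspace of a transposition. -/
theorem stmt_6 {N d : ℕ} (hN : 2 ≤ N)
    (ρ : Equiv.Perm (Fin N) →* Matrix.GeneralLinearGroup (Fin d) ℂ) (m : ℤ)
    (U : Set (Fin N → ℂ)) (hUopen : IsOpen U) (hUconn : IsConnected U)
    (hU : U ⊆ Cconf N)
    (Φ : (Fin N → ℂ) → Matrix (Fin d) (Fin d) ℂ)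
    (hdiff : ∀ a b : Fin d, DifferentiableOn ℂ (fun z => Φ z a b) U)
    (hinv : ∀ z ∈ U, IsUnit (Φ z))
    (hKZ : ∀ z ∈ U, ∀ i : Fin N, ∀ a b : Fin d,
      fderiv ℂ (fun z => Φ z a b) z (Pi.single i 1) =
        (m : ℂ) * ∑ j ∈ Finset.univ.filter (fun j => j ≠ i),
          (z i - z j)⁻¹ *
            ((((ρ (Equiv.swap i j) : Matrix (Fin d) (Fin d) ℂ) + 1) * Φ z) a b)) :
    ∃ C : ℂ, C ≠ 0 ∧ ∀ z ∈ U,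
      (Φ z).det =
        C * ∏ p ∈ Finset.univ.filter (fun p : Fin N × Fin N => p.1 < p.2),
          (z p.1 - z p.2) ^
            (2 * m * (Module.finrank ℂ
              (LinearMap.ker (Matrix.toLin'
                ((ρ (Equiv.swap (⟨0, by omega⟩ : Fin N) (⟨1, by omega⟩ : Fin N)) :
                  Matrix (Fin d) (Fin d) ℂ) - 1))) : ℤ)) := by
  classical
  open KZAux Finset in
  set dp : ℕ := Module.finrank ℂ
      (LinearMap.ker (Matrix.toLin'
        ((ρ (Equiv.swap (⟨0, by omega⟩ : Fin N) (⟨1, by omega⟩ : Fin N)) :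
          Matrix (Fin d) (Fin d) ℂ) - 1))) with hdp
  set e : ℤ := 2 * m * (dp : ℤ) with he
  -- basic facts
  have h01 : (⟨0, by omega⟩ : Fin N) ≠ (⟨1, by omega⟩ : Fin N) := by
    intro hc
    have := congrArg Fin.val hc
    simp at this
  -- trace identity
  have htrace : ∀ i j : Fin N, i ≠ j →
      Matrix.trace ((ρ (Equiv.swap i j) : Matrix (Fin d) (Fin d) ℂ) + 1) = 2 * (dp : ℂ) := by
    intro i j hij
    have h1 := KZAux.trace_invol
      ((ρ (Equiv.swap (⟨0, by omega⟩ : Fin N) (⟨1, by omega⟩ : Fin N)) :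
        Matrix (Fin d) (Fin d) ℂ)) (KZAux.rho_swap_sq ρ _ _)
    have h2 := KZAux.trace_rho_swap ρ hij h01
    rw [Matrix.trace_add] at h1 ⊢
    rw [h2]
    rw [← hdp] at h1
    exact h1
  -- distinct coordinates
  have hzne : ∀ z ∈ U, ∀ i j : Fin N, i ≠ j → z i ≠ z j := fun z hz => hU hz
  -- entrywise differentiability at points of U
  have hdAt : ∀ z ∈ U, ∀ a b : Fin d, DifferentiableAt ℂ (fun z => Φ z a b) z := by
    intro z hz a b
    exact (hdiff a b).differentiableAt (hUopen.mem_nhds hz)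
  -- the KZ matrix
  set B : (Fin N → ℂ) → Fin N → Matrix (Fin d) (Fin d) ℂ := fun z i =>
    (m : ℂ) • ∑ j ∈ univ.filter (fun j => j ≠ i),
      (z i - z j)⁻¹ • ((ρ (Equiv.swap i j) : Matrix (Fin d) (Fin d) ℂ) + 1) with hB
  have hBder : ∀ z ∈ U, ∀ i : Fin N, ∀ a b : Fin d,
      fderiv ℂ (fun z => Φ z a b) z (Pi.single i 1) = (B z i * Φ z) a b := by
    intro z hz i a b
    rw [hKZ z hz i a b, hB]
    simp only [Matrix.smul_mul, Matrix.sum_mul, Matrix.smul_apply, Matrix.sum_apply,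
      smul_eq_mul, Finset.mul_sum]

  have hBtrace : ∀ z ∈ U, ∀ i : Fin N,
      (B z i).trace = ∑ j ∈ univ.filter (fun j => j ≠ i), (e : ℂ) * (z i - z j)⁻¹ := by
    intro z hz i
    rw [hB]
    simp only [Matrix.trace_smul, Matrix.trace_sum, Matrix.trace_smul]
    rw [Finset.smul_sum]
    refine Finset.sum_congr rfl fun j hj => ?_
    have hji : j ≠ i := (Finset.mem_filter.mp hj).2
    rw [htrace i j (Ne.symm hji)]
    simp only [smul_eq_mul, he]
    push_cast
    ring
  -- H = det Φ * Pfun (-e); it is locally constant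
  set H : (Fin N → ℂ) → ℂ := fun z => (Φ z).det * KZAux.Pfun N (-e) z with hH
  have hHdiffAt : ∀ z ∈ U, DifferentiableAt ℂ H z := by
    intro z hz
    exact (KZAux.det_diffAt Φ z (hdAt z hz)).mul
      ((KZAux.Pfun_hasFDerivAt (-e) z (hzne z hz)).differentiableAt)
  have hHder : ∀ z ∈ U, fderiv ℂ H z = 0 := by
    intro z hz
    have hdet := KZAux.det_diffAt Φ z (hdAt z hz)
    have hPd := (KZAux.Pfun_hasFDerivAt (-e) z (hzne z hz)).differentiableAt
    have hdir : ∀ i : Fin N, fderiv ℂ H z (Pi.single i 1) = 0 := by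
      intro i
      rw [hH, fderiv_fun_mul hdet hPd]
      rw [ContinuousLinearMap.add_apply, ContinuousLinearMap.smul_apply,
        ContinuousLinearMap.smul_apply]
      rw [KZAux.det_deriv_dir Φ z (Pi.single i 1) (B z i) (hdAt z hz)
        (hBder z hz i)]
      rw [KZAux.Pfun_deriv_dir (-e) z (hzne z hz) i]
      rw [hBtrace z hz i]
      have hneg : ∑ j ∈ univ.filter (fun j => j ≠ i), ((-e : ℤ) : ℂ) * (z i - z j)⁻¹
          = -∑ j ∈ univ.filter (fun j => j ≠ i), (e : ℂ) * (z i - z j)⁻¹ := by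
        rw [← Finset.sum_neg_distrib]
        refine Finset.sum_congr rfl fun j _ => ?_
        push_cast
        ring
      rw [hneg]
      simp only [smul_eq_mul]
      ring
    ext v
    rw [ContinuousLinearMap.zero_apply]
    have hv : v = ∑ i, v i • (Pi.single i (1:ℂ) : Fin N → ℂ) := by
      funext j
      rw [Finset.sum_apply]
      simp [Pi.single_apply]
    rw [hv, map_sum]
    refine Finset.sum_eq_zero fun i _ => ?_
    rw [(fderiv ℂ H z).map_smul, hdir i, smul_zero]
  -- conclusion
  obtain ⟨z₀, hz₀⟩ := hUconn.nonempty
  refine ⟨H z₀, ?_, ?_⟩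
  · have hdet0 : (Φ z₀).det ≠ 0 := by
      have := (Matrix.isUnit_iff_isUnit_det (Φ z₀)).mp (hinv z₀ hz₀)
      exact IsUnit.ne_zero this
    exact mul_ne_zero hdet0 (KZAux.Pfun_ne_zero (-e) z₀ (hzne z₀ hz₀))
  · intro z hz
    have hconst : H z = H z₀ :=
      KZAux.const_of_fderiv_zero hUopen hUconn.isPreconnected hHdiffAt hHder hz₀ hz
    have hPinv : KZAux.Pfun N (-e) z = (KZAux.Pfun N e z)⁻¹ := by
      rw [KZAux.Pfun, KZAux.Pfun, ← Finset.prod_inv_distrib]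
      refine Finset.prod_congr rfl fun p _ => ?_
      rw [_root_.zpow_neg]
    have hPne : KZAux.Pfun N e z ≠ 0 := KZAux.Pfun_ne_zero e z (hzne z hz)
    have hdet : (Φ z).det = H z₀ * KZAux.Pfun N e z := by
      rw [← hconst]
      have hHz : H z = (Φ z).det * KZAux.Pfun N (-e) z := rfl
      rw [hHz, hPinv]
      field_simp
    exact hdet
end

section
/- (Frobenius formula.) For every vector w in the Specht module W^λ ⊆ V^{⊗N}, the central element Σ_{1≤i<j≤N} s_{ij} of the group algebra of S_N acts by the scalar Σ_{b∈λ}(c(b)−r(b)): that is, Σ_{1≤i<j≤N} s_{ij}·w = (Σ_{b∈λ}(c(b)−r(b))) w, where s_{ij} denotes the transposition (i j) acting on V^{⊗N} by permuting tensor factors. -/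
open scoped BigOperators

noncomputable section

/-- The boxes of the Young diagram `μ`. -/
abbrev Cell (μ : YoungDiagram) : Type := {c : ℕ × ℕ // c ∈ μ.cells}

/-- A numbering of `μ` with `N` boxes: a bijection from the boxes to `{1,…,N}`. -/
abbrev YNumbering (μ : YoungDiagram) (N : ℕ) : Type := Cell μ ≃ Fin N

/-- The number of rows of `μ` (the length of the 0th column). -/
def nRows (μ : YoungDiagram) : ℕ := μ.colLen 0

/-- The row index of a box, as an element of `Fin (nRows μ)`. -/
def rowFin (μ : YoungDiagram) (c : Cell μ) : Fin (nRows μ) :=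
  ⟨c.1.1, by
    have h1 : (c.1.1, c.1.2) ∈ μ := by
      rw [Prod.mk.eta]; exact (YoungDiagram.mem_cells _).mp c.2
    exact lt_of_lt_of_le (YoungDiagram.mem_iff_lt_colLen.mp h1)
      (μ.colLen_anti 0 c.1.2 (Nat.zero_le _))⟩

/-- The weight multi-index `α_T` of a numbering `T`: `α_k` is the row
containing the box `T⁻¹(k)`. -/
def multiIdx (μ : YoungDiagram) {N : ℕ} (T : YNumbering μ N) :
    Fin N → Fin (nRows μ) :=
  fun k => rowFin μ (T.symm k)

/-- The pure tensor `e_T = e_{α_1}⊗…⊗e_{α_N}` associated to a numbering `T`,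
in the model of `V^{⊗N}` (with `V = ℂ^{nRows μ}`) as the space of functions
`(Fin N → Fin (nRows μ)) → ℂ`, where a pure basis tensor is the indicator
function of its multi-index. -/
def eT (μ : YoungDiagram) {N : ℕ} (T : YNumbering μ N) :
    (Fin N → Fin (nRows μ)) → ℂ :=
  fun β => if β = multiIdx μ T then 1 else 0

/-- The column group `C(T)`: permutations preserving the set of entries of
each column of `T`. -/
def colGroup (μ : YoungDiagram) {N : ℕ} (T : YNumbering μ N) :
    Finset (Equiv.Perm (Fin N)) :=
  Finset.univ.filter fun σ =>
    ∀ k : Fin N, ((T.symm (σ k)) : ℕ × ℕ).2 = ((T.symm k) : ℕ × ℕ).2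

/-- `v_T = Σ_{σ ∈ C(T)} sign(σ) e_{σT}` where `σT = σ∘T`. -/
def vT (μ : YoungDiagram) {N : ℕ} (T : YNumbering μ N) :
    (Fin N → Fin (nRows μ)) → ℂ :=
  ∑ σ ∈ colGroup μ T, ((Equiv.Perm.sign σ : ℤ) : ℂ) • eT μ (T.trans σ)

/-- A standard tableau: a numbering increasing from left to right along rows
and from top to bottom along columns. -/
abbrev IsStandard (μ : YoungDiagram) {N : ℕ} (T : YNumbering μ N) : Prop :=
  ∀ c c' : Cell μ,
    ((c.1.1 = c'.1.1 ∧ c.1.2 < c'.1.2) ∨ (c.1.2 = c'.1.2 ∧ c.1.1 < c'.1.1)) →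
      T c < T c'

namespace Frob

open Finset Equiv

variable {μ : YoungDiagram} {N : ℕ}

/-- sorted pair -/
def sp {N : ℕ} (a b : Fin N) : Fin N × Fin N := if a < b then (a, b) else (b, a)

lemma sp_of_lt {a b : Fin N} (h : a < b) : sp a b = (a, b) := if_pos h

lemma sp_comm (a b : Fin N) : sp a b = sp b a := by
  unfold sp
  rcases lt_trichotomy a b with h | rfl | h
  · rw [if_pos h, if_neg (asymm h)]
  · rfl
  · rw [if_neg (asymm h), if_pos h]

lemma sp_lt {a b : Fin N} (h : a ≠ b) : (sp a b).1 < (sp a b).2 := by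
  unfold sp
  rcases h.lt_or_gt with h' | h'
  · rw [if_pos h']; exact h'
  · rw [if_neg (asymm h')]; exact h'

lemma sp_cases (a b : Fin N) : sp a b = (a, b) ∨ sp a b = (b, a) := by
  unfold sp; split_ifs
  · exact Or.inl rfl
  · exact Or.inr rfl

lemma sp_swap (a b : Fin N) :
    Equiv.swap (sp a b).1 (sp a b).2 = Equiv.swap a b := by
  rcases sp_cases a b with h | h <;> rw [h]
  exact Equiv.swap_comm _ _

lemma sp_eta {p : Fin N × Fin N} (h : p.1 < p.2) : sp p.1 p.2 = p := by
  rw [sp_of_lt h]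

lemma multiIdx_apply (T : YNumbering μ N) (E : Equiv.Perm (Fin N)) (k : Fin N) :
    multiIdx μ (T.trans E) k = rowFin μ (T.symm (E.symm k)) := rfl

lemma eT_congr {T T' : YNumbering μ N}
    (h : multiIdx μ T = multiIdx μ T') : eT μ T = eT μ T' := by
  unfold eT; rw [h]

lemma eT_comp (T' : YNumbering μ N) (ρ : Equiv.Perm (Fin N))
    (β : Fin N → Fin (nRows μ)) :
    eT μ T' (β ∘ ρ) = eT μ (T'.trans ρ) β := by
  unfold eT
  have hiff : β ∘ ρ = multiIdx μ T' ↔ β = multiIdx μ (T'.trans ρ) := by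
    constructor
    · intro h; funext k
      have := congrFun h (ρ.symm k)
      simpa [multiIdx_apply, multiIdx] using this
    · intro h; funext k
      have := congrFun h (ρ k)
      simpa [multiIdx_apply, multiIdx] using this
  rw [if_congr hiff rfl rfl]

lemma mem_colGroup_iff {T : YNumbering μ N} {σ : Equiv.Perm (Fin N)} :
    σ ∈ colGroup μ T ↔
      ∀ k : Fin N, ((T.symm (σ k)) : ℕ × ℕ).2 = ((T.symm k) : ℕ × ℕ).2 := by
  unfold colGroup; simp

lemma colGroup_mul {T : YNumbering μ N} {σ τ : Equiv.Perm (Fin N)}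
    (hσ : σ ∈ colGroup μ T) (hτ : τ ∈ colGroup μ T) : σ * τ ∈ colGroup μ T := by
  rw [mem_colGroup_iff] at *
  intro k
  rw [Equiv.Perm.mul_apply, hσ (τ k), hτ k]

lemma eT_row_swap {T : YNumbering μ N} {i j : Fin N}
    (h : ((T.symm i) : ℕ × ℕ).1 = ((T.symm j) : ℕ × ℕ).1)
    (σ : Equiv.Perm (Fin N)) :
    eT μ (T.trans ((Equiv.swap i j).trans σ)) = eT μ (T.trans σ) := by
  apply eT_congr
  funext k
  rw [multiIdx_apply, multiIdx_apply]
  have hs : ((Equiv.swap i j).trans σ).symm k = Equiv.swap i j (σ.symm k) := by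
    rw [Equiv.symm_trans_apply, Equiv.symm_swap]
  rw [hs]
  set m := σ.symm k with hm
  apply Fin.ext
  show ((T.symm (Equiv.swap i j m)) : ℕ × ℕ).1 = ((T.symm m) : ℕ × ℕ).1
  rcases eq_or_ne m i with rfl | hmi
  · rw [Equiv.swap_apply_left]; exact h.symm
  rcases eq_or_ne m j with rfl | hmj
  · rw [Equiv.swap_apply_right]; exact h
  · rw [Equiv.swap_apply_of_ne_of_ne hmi hmj]

lemma sign_cast_mul (σ τ : Equiv.Perm (Fin N)) :
    ((Equiv.Perm.sign (σ * τ) : ℤ) : ℂ)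
      = ((Equiv.Perm.sign σ : ℤ) : ℂ) * ((Equiv.Perm.sign τ : ℤ) : ℂ) := by
  rw [map_mul]; push_cast; ring

lemma G_col {T : YNumbering μ N} {i j : Fin N} (hij : i ≠ j)
    (h : ((T.symm i) : ℕ × ℕ).2 = ((T.symm j) : ℕ × ℕ).2) :
    (∑ σ ∈ colGroup μ T, ((Equiv.Perm.sign σ : ℤ) : ℂ) •
        eT μ (T.trans ((Equiv.swap i j).trans σ)))
      = - vT μ T := by
  have hρ : Equiv.swap i j ∈ colGroup μ T := by
    rw [mem_colGroup_iff]; intro k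
    rcases eq_or_ne k i with rfl | hki
    · rw [Equiv.swap_apply_left]; exact h.symm
    rcases eq_or_ne k j with rfl | hkj
    · rw [Equiv.swap_apply_right]; exact h
    · rw [Equiv.swap_apply_of_ne_of_ne hki hkj]
  rw [vT, ← Finset.sum_neg_distrib]
  refine Finset.sum_bij' (fun σ _ => σ * Equiv.swap i j)
    (fun σ _ => σ * Equiv.swap i j) ?_ ?_ ?_ ?_ ?_
  · intro σ hσ; exact colGroup_mul hσ hρ
  · intro σ hσ; exact colGroup_mul hσ hρ
  · intro σ hσ; simp [mul_assoc]
  · intro σ hσ; simp [mul_assoc]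
  · intro σ hσ
    have h1 : (Equiv.swap i j).trans σ = σ * Equiv.swap i j := rfl
    rw [h1, sign_cast_mul, Equiv.Perm.sign_swap hij]
    push_cast
    simp [mul_neg_one, neg_smul]

lemma G_mixed {T : YNumbering μ N} {i j : Fin N}
    (hr : ((T.symm i) : ℕ × ℕ).1 < ((T.symm j) : ℕ × ℕ).1)
    (hc : ((T.symm i) : ℕ × ℕ).2 ≠ ((T.symm j) : ℕ × ℕ).2) :
    (∑ σ ∈ colGroup μ T, ((Equiv.Perm.sign σ : ℤ) : ℂ) •
        eT μ (T.trans ((Equiv.swap i j).trans σ)))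
      = 0 := by
  have hd : (((T.symm i) : ℕ × ℕ).1, ((T.symm j) : ℕ × ℕ).2) ∈ μ.cells := by
    rw [YoungDiagram.mem_cells]
    refine μ.up_left_mem (le_of_lt hr) le_rfl ?_
    rw [Prod.mk.eta]
    exact (YoungDiagram.mem_cells _).mp (T.symm j).2
  set d : Cell μ := ⟨(((T.symm i) : ℕ × ℕ).1, ((T.symm j) : ℕ × ℕ).2), hd⟩ with hdd
  set m : Fin N := T d with hmm
  have hTm : T.symm m = d := Equiv.symm_apply_apply T d
  have hmrow : ((T.symm m) : ℕ × ℕ).1 = ((T.symm i) : ℕ × ℕ).1 := by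
    rw [hTm]
  have hmcol : ((T.symm m) : ℕ × ℕ).2 = ((T.symm j) : ℕ × ℕ).2 := by
    rw [hTm]
  have hmi : m ≠ i := by
    intro hEq
    apply hc
    rw [← hEq, hmcol]
  have hmj : m ≠ j := by
    intro hEq
    have := hmrow
    rw [hEq] at this
    exact absurd (this ▸ hr) (lt_irrefl _)
  set u : Equiv.Perm (Fin N) := Equiv.swap m j with huu
  have hu : u ∈ colGroup μ T := by
    rw [mem_colGroup_iff]; intro k
    rcases eq_or_ne k m with rfl | hkm
    · rw [huu, Equiv.swap_apply_left, ← hmcol]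
    rcases eq_or_ne k j with rfl | hkj
    · rw [huu, Equiv.swap_apply_right, hmcol]
    · rw [huu, Equiv.swap_apply_of_ne_of_ne hkm hkj]
  have hrowkey : ∀ x : Fin N,
      ((T.symm (Equiv.swap i j (u x))) : ℕ × ℕ).1
        = ((T.symm (Equiv.swap i j x)) : ℕ × ℕ).1 := by
    intro x
    rcases eq_or_ne x m with rfl | hxm
    · rw [huu, Equiv.swap_apply_left, Equiv.swap_apply_right,
        Equiv.swap_apply_of_ne_of_ne hmi hmj, hmrow]
    rcases eq_or_ne x j with rfl | hxj
    · rw [huu, Equiv.swap_apply_right, Equiv.swap_apply_right,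
        Equiv.swap_apply_of_ne_of_ne hmi hmj, hmrow]
    · rw [huu, Equiv.swap_apply_of_ne_of_ne hxm hxj]
  have hkey : ∀ σ : Equiv.Perm (Fin N),
      multiIdx μ (T.trans ((Equiv.swap i j).trans (σ * u)))
        = multiIdx μ (T.trans ((Equiv.swap i j).trans σ)) := by
    intro σ
    funext k
    rw [multiIdx_apply, multiIdx_apply]
    have h1 : ((Equiv.swap i j).trans (σ * u)).symm k
        = Equiv.swap i j (u (σ.symm k)) := by
      have : (σ * u : Equiv.Perm (Fin N)).symm k = u.symm (σ.symm k) := rfl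
      rw [Equiv.symm_trans_apply, this, Equiv.symm_swap, huu, Equiv.symm_swap]
    have h2 : ((Equiv.swap i j).trans σ).symm k
        = Equiv.swap i j (σ.symm k) := by
      rw [Equiv.symm_trans_apply, Equiv.symm_swap]
    rw [h1, h2]
    exact Fin.ext (hrowkey (σ.symm k))
  refine Finset.sum_involution (fun σ _ => σ * u) ?_ ?_ ?_ ?_
  · intro σ hσ
    have e1 : eT μ (T.trans ((Equiv.swap i j).trans (σ * u)))
        = eT μ (T.trans ((Equiv.swap i j).trans σ)) := eT_congr (hkey σ)
    rw [e1, sign_cast_mul, huu, Equiv.Perm.sign_swap hmj]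
    push_cast
    rw [mul_neg_one, neg_smul, add_neg_cancel]
  · intro σ hσ _ hEq
    have hu1 : u = 1 := by
      have := congrArg (fun τ => σ⁻¹ * τ) hEq
      simpa [mul_assoc] using this
    rw [huu] at hu1
    rw [Equiv.Perm.one_def] at hu1
    exact hmj (Equiv.swap_eq_refl_iff.mp hu1)
  · intro σ hσ; exact colGroup_mul hσ hu
  · intro σ hσ; simp [mul_assoc, huu]


lemma conj_reindex (T : YNumbering μ N) (σ : Equiv.Perm (Fin N)) :
    (∑ p ∈ Finset.univ.filter (fun p : Fin N × Fin N => p.1 < p.2),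
        eT μ (T.trans (σ.trans (Equiv.swap p.1 p.2))))
      = ∑ p ∈ Finset.univ.filter (fun p : Fin N × Fin N => p.1 < p.2),
        eT μ (T.trans ((Equiv.swap p.1 p.2).trans σ)) := by
  refine Finset.sum_bij' (fun p _ => sp (σ.symm p.1) (σ.symm p.2))
    (fun p _ => sp (σ p.1) (σ p.2)) ?_ ?_ ?_ ?_ ?_
  · intro p hp
    rw [Finset.mem_filter] at hp ⊢
    refine ⟨Finset.mem_univ _, sp_lt ?_⟩
    exact fun hEq => absurd (σ.symm.injective hEq) (ne_of_lt hp.2)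
  · intro p hp
    rw [Finset.mem_filter] at hp ⊢
    refine ⟨Finset.mem_univ _, sp_lt ?_⟩
    exact fun hEq => absurd (σ.injective hEq) (ne_of_lt hp.2)
  · intro p hp
    rw [Finset.mem_filter] at hp
    rcases sp_cases (σ.symm p.1) (σ.symm p.2) with h | h <;> rw [h]
    · simp only [Equiv.apply_symm_apply]
      exact sp_eta hp.2
    · show sp (σ (σ.symm p.2)) (σ (σ.symm p.1)) = p
      rw [Equiv.apply_symm_apply, Equiv.apply_symm_apply, sp_comm]
      exact sp_eta hp.2
  · intro p hp
    rw [Finset.mem_filter] at hp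
    rcases sp_cases (σ p.1) (σ p.2) with h | h <;> rw [h]
    · simp only [Equiv.symm_apply_apply]
      exact sp_eta hp.2
    · show sp (σ.symm (σ p.2)) (σ.symm (σ p.1)) = p
      rw [Equiv.symm_apply_apply, Equiv.symm_apply_apply, sp_comm]
      exact sp_eta hp.2
  · intro p hp
    rw [sp_swap]
    have hswap : σ.trans (Equiv.swap p.1 p.2)
        = (Equiv.swap (σ.symm p.1) (σ.symm p.2)).trans σ := by
      have h0 := Equiv.swap_apply_apply σ (σ.symm p.1) (σ.symm p.2)
      rw [Equiv.apply_symm_apply, Equiv.apply_symm_apply] at h0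
      have h1 : σ.trans (Equiv.swap p.1 p.2) = Equiv.swap p.1 p.2 * σ := rfl
      have h2 : (Equiv.swap (σ.symm p.1) (σ.symm p.2)).trans σ
          = σ * Equiv.swap (σ.symm p.1) (σ.symm p.2) := rfl
      rw [h1, h2, h0, mul_assoc, inv_mul_cancel, mul_one]
    rw [hswap]

lemma row_eq_symm_pair {T : YNumbering μ N} {a b x y : Fin N}
    (hx : x = a ∧ y = b ∨ x = b ∧ y = a)
    (h : ((T.symm a) : ℕ × ℕ).1 = ((T.symm b) : ℕ × ℕ).1) :
    ((T.symm x) : ℕ × ℕ).1 = ((T.symm y) : ℕ × ℕ).1 := by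
  rcases hx with ⟨rfl, rfl⟩ | ⟨rfl, rfl⟩
  · exact h
  · exact h.symm

lemma col_eq_symm_pair {T : YNumbering μ N} {a b x y : Fin N}
    (hx : x = a ∧ y = b ∨ x = b ∧ y = a)
    (h : ((T.symm a) : ℕ × ℕ).2 = ((T.symm b) : ℕ × ℕ).2) :
    ((T.symm x) : ℕ × ℕ).2 = ((T.symm y) : ℕ × ℕ).2 := by
  rcases hx with ⟨rfl, rfl⟩ | ⟨rfl, rfl⟩
  · exact h
  · exact h.symm

lemma sp_pair (a b : Fin N) :
    (sp a b).1 = a ∧ (sp a b).2 = b ∨ (sp a b).1 = b ∧ (sp a b).2 = a := by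
  rcases sp_cases a b with h | h <;> rw [h]
  · exact Or.inl ⟨rfl, rfl⟩
  · exact Or.inr ⟨rfl, rfl⟩

lemma card_row (T : YNumbering μ N) :
    (Finset.univ.filter (fun p : Fin N × Fin N =>
        p.1 < p.2 ∧ ((T.symm p.1) : ℕ × ℕ).1 = ((T.symm p.2) : ℕ × ℕ).1)).card
      = ∑ c ∈ μ.cells, c.2 := by
  have hsig : ∑ c ∈ μ.cells, c.2
      = (μ.cells.sigma fun c => Finset.range c.2).card := by
    rw [Finset.card_sigma]
    simp
  rw [hsig]
  -- small cell of a sigma element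
  have hcell2 : ∀ q : (_ : ℕ × ℕ) × ℕ, q ∈ (μ.cells.sigma fun c => Finset.range c.2) →
      (q.1.1, q.2) ∈ μ.cells := by
    intro q hq
    have h1 := (Finset.mem_sigma.mp hq).1
    have h2 := Finset.mem_range.mp (Finset.mem_sigma.mp hq).2
    rw [YoungDiagram.mem_cells] at h1 ⊢
    exact μ.up_left_mem le_rfl (le_of_lt h2) (by rwa [Prod.mk.eta])
  refine Finset.card_bij'
    (fun p _ => if ((T.symm p.1) : ℕ × ℕ).2 < ((T.symm p.2) : ℕ × ℕ).2
      then ⟨((T.symm p.2) : ℕ × ℕ), ((T.symm p.1) : ℕ × ℕ).2⟩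
      else ⟨((T.symm p.1) : ℕ × ℕ), ((T.symm p.2) : ℕ × ℕ).2⟩)
    (fun q hq => sp (T ⟨q.1, (Finset.mem_sigma.mp hq).1⟩)
      (T ⟨(q.1.1, q.2), hcell2 q hq⟩))
    ?_ ?_ ?_ ?_
  · -- i maps into sigma set
    intro p hp
    rw [Finset.mem_filter] at hp
    obtain ⟨-, hlt, hrow⟩ := hp
    have hne : ((T.symm p.1) : ℕ × ℕ).2 ≠ ((T.symm p.2) : ℕ × ℕ).2 := by
      intro hEq
      exact absurd (T.symm.injective (Subtype.ext (Prod.ext hrow hEq)))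
        (ne_of_lt hlt)
    rw [Finset.mem_sigma]
    split_ifs with hcl
    · exact ⟨(T.symm p.2).2, Finset.mem_range.mpr hcl⟩
    · exact ⟨(T.symm p.1).2, Finset.mem_range.mpr
        (lt_of_le_of_ne (le_of_not_gt hcl) (Ne.symm hne))⟩
  · -- j maps into filter set
    intro q hq
    have h2 := Finset.mem_range.mp (Finset.mem_sigma.mp hq).2
    rw [Finset.mem_filter]
    have hgen : ∀ c1 c2 : Cell μ, (c1 : ℕ × ℕ) = q.1 →
        (c2 : ℕ × ℕ) = (q.1.1, q.2) →
        (sp (T c1) (T c2)).1 < (sp (T c1) (T c2)).2 ∧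
        ((T.symm (sp (T c1) (T c2)).1) : ℕ × ℕ).1
          = ((T.symm (sp (T c1) (T c2)).2) : ℕ × ℕ).1 := by
      intro c1 c2 h1 h2'
      have hne : T c1 ≠ T c2 := by
        intro hEq
        have hc : c1 = c2 := T.injective hEq
        rw [hc, h2'] at h1
        have : q.1.2 = q.2 := by rw [← h1]
        exact absurd (this ▸ h2) (lt_irrefl _)
      refine ⟨sp_lt hne, ?_⟩
      have hpair := sp_pair (T c1) (T c2)
      have hx : (sp (T c1) (T c2)).1 = T c1 ∧ (sp (T c1) (T c2)).2 = T c2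
          ∨ (sp (T c1) (T c2)).1 = T c2 ∧ (sp (T c1) (T c2)).2 = T c1 := hpair
      refine row_eq_symm_pair hx ?_
      rw [Equiv.symm_apply_apply, Equiv.symm_apply_apply, h1, h2']
    exact ⟨Finset.mem_univ _, hgen _ _ rfl rfl⟩
  · -- j (i p) = p
    intro p hp
    rw [Finset.mem_filter] at hp
    obtain ⟨-, hlt, hrow⟩ := hp
    split_ifs with hcl
    · have hgen : ∀ d1 d2 : Cell μ, d1 = T.symm p.2 → d2 = T.symm p.1 →
          sp (T d1) (T d2) = p := by
        intro d1 d2 h1 h2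
        rw [h1, h2, Equiv.apply_symm_apply, Equiv.apply_symm_apply, sp_comm]
        exact sp_eta hlt
      exact hgen _ _ (Subtype.ext rfl) (Subtype.ext (Prod.ext hrow.symm rfl))
    · have hgen : ∀ d1 d2 : Cell μ, d1 = T.symm p.1 → d2 = T.symm p.2 →
          sp (T d1) (T d2) = p := by
        intro d1 d2 h1 h2
        rw [h1, h2, Equiv.apply_symm_apply, Equiv.apply_symm_apply]
        exact sp_eta hlt
      exact hgen _ _ (Subtype.ext rfl) (Subtype.ext (Prod.ext hrow rfl))
  · -- i (j q) = q
    intro q hq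
    have h2 := Finset.mem_range.mp (Finset.mem_sigma.mp hq).2
    have hgen : ∀ c1 c2 : Cell μ, (c1 : ℕ × ℕ) = q.1 →
        (c2 : ℕ × ℕ) = (q.1.1, q.2) →
        (if ((T.symm (sp (T c1) (T c2)).1) : ℕ × ℕ).2
              < ((T.symm (sp (T c1) (T c2)).2) : ℕ × ℕ).2
          then (⟨((T.symm (sp (T c1) (T c2)).2) : ℕ × ℕ),
                  ((T.symm (sp (T c1) (T c2)).1) : ℕ × ℕ).2⟩ : (_ : ℕ × ℕ) × ℕ)
          else ⟨((T.symm (sp (T c1) (T c2)).1) : ℕ × ℕ),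
                  ((T.symm (sp (T c1) (T c2)).2) : ℕ × ℕ).2⟩)
          = q := by
      intro c1 c2 h1 h2'
      have hq2 : q.2 < q.1.2 := h2
      rcases sp_cases (T c1) (T c2) with h | h <;> rw [h]
      · simp only [Equiv.symm_apply_apply, h1, h2']
        rw [if_neg (by simpa using not_lt_of_gt hq2)]
      · simp only [Equiv.symm_apply_apply, h1, h2']
        rw [if_pos (by simpa using hq2)]
    exact hgen _ _ rfl rfl

lemma card_col (T : YNumbering μ N) :
    (Finset.univ.filter (fun p : Fin N × Fin N =>
        p.1 < p.2 ∧ ((T.symm p.1) : ℕ × ℕ).2 = ((T.symm p.2) : ℕ × ℕ).2)).card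
      = ∑ c ∈ μ.cells, c.1 := by
  have hsig : ∑ c ∈ μ.cells, c.1
      = (μ.cells.sigma fun c => Finset.range c.1).card := by
    rw [Finset.card_sigma]
    simp
  rw [hsig]
  have hcell2 : ∀ q : (_ : ℕ × ℕ) × ℕ, q ∈ (μ.cells.sigma fun c => Finset.range c.1) →
      (q.2, q.1.2) ∈ μ.cells := by
    intro q hq
    have h1 := (Finset.mem_sigma.mp hq).1
    have h2 := Finset.mem_range.mp (Finset.mem_sigma.mp hq).2
    rw [YoungDiagram.mem_cells] at h1 ⊢
    exact μ.up_left_mem (le_of_lt h2) le_rfl (by rwa [Prod.mk.eta])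
  refine Finset.card_bij'
    (fun p _ => if ((T.symm p.1) : ℕ × ℕ).1 < ((T.symm p.2) : ℕ × ℕ).1
      then ⟨((T.symm p.2) : ℕ × ℕ), ((T.symm p.1) : ℕ × ℕ).1⟩
      else ⟨((T.symm p.1) : ℕ × ℕ), ((T.symm p.2) : ℕ × ℕ).1⟩)
    (fun q hq => sp (T ⟨q.1, (Finset.mem_sigma.mp hq).1⟩)
      (T ⟨(q.2, q.1.2), hcell2 q hq⟩))
    ?_ ?_ ?_ ?_
  · intro p hp
    rw [Finset.mem_filter] at hp
    obtain ⟨-, hlt, hcol⟩ := hp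
    have hne : ((T.symm p.1) : ℕ × ℕ).1 ≠ ((T.symm p.2) : ℕ × ℕ).1 := by
      intro hEq
      exact absurd (T.symm.injective (Subtype.ext (Prod.ext hEq hcol)))
        (ne_of_lt hlt)
    rw [Finset.mem_sigma]
    split_ifs with hcl
    · exact ⟨(T.symm p.2).2, Finset.mem_range.mpr hcl⟩
    · exact ⟨(T.symm p.1).2, Finset.mem_range.mpr
        (lt_of_le_of_ne (le_of_not_gt hcl) (Ne.symm hne))⟩
  · intro q hq
    have h2 := Finset.mem_range.mp (Finset.mem_sigma.mp hq).2
    rw [Finset.mem_filter]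
    have hgen : ∀ c1 c2 : Cell μ, (c1 : ℕ × ℕ) = q.1 →
        (c2 : ℕ × ℕ) = (q.2, q.1.2) →
        (sp (T c1) (T c2)).1 < (sp (T c1) (T c2)).2 ∧
        ((T.symm (sp (T c1) (T c2)).1) : ℕ × ℕ).2
          = ((T.symm (sp (T c1) (T c2)).2) : ℕ × ℕ).2 := by
      intro c1 c2 h1 h2'
      have hne : T c1 ≠ T c2 := by
        intro hEq
        have hc : c1 = c2 := T.injective hEq
        rw [hc, h2'] at h1
        have : q.2 = q.1.1 := by rw [← h1]
        exact absurd (this ▸ h2) (lt_irrefl _)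
      refine ⟨sp_lt hne, ?_⟩
      refine col_eq_symm_pair (sp_pair (T c1) (T c2)) ?_
      rw [Equiv.symm_apply_apply, Equiv.symm_apply_apply, h1, h2']
    exact ⟨Finset.mem_univ _, hgen _ _ rfl rfl⟩
  · intro p hp
    rw [Finset.mem_filter] at hp
    obtain ⟨-, hlt, hcol⟩ := hp
    split_ifs with hcl
    · have hgen : ∀ d1 d2 : Cell μ, d1 = T.symm p.2 → d2 = T.symm p.1 →
          sp (T d1) (T d2) = p := by
        intro d1 d2 h1 h2
        rw [h1, h2, Equiv.apply_symm_apply, Equiv.apply_symm_apply, sp_comm]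
        exact sp_eta hlt
      exact hgen _ _ (Subtype.ext rfl) (Subtype.ext (Prod.ext rfl hcol.symm))
    · have hgen : ∀ d1 d2 : Cell μ, d1 = T.symm p.1 → d2 = T.symm p.2 →
          sp (T d1) (T d2) = p := by
        intro d1 d2 h1 h2
        rw [h1, h2, Equiv.apply_symm_apply, Equiv.apply_symm_apply]
        exact sp_eta hlt
      exact hgen _ _ (Subtype.ext rfl) (Subtype.ext (Prod.ext rfl hcol))
  · intro q hq
    have h2 := Finset.mem_range.mp (Finset.mem_sigma.mp hq).2
    have hgen : ∀ c1 c2 : Cell μ, (c1 : ℕ × ℕ) = q.1 →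
        (c2 : ℕ × ℕ) = (q.2, q.1.2) →
        (if ((T.symm (sp (T c1) (T c2)).1) : ℕ × ℕ).1
              < ((T.symm (sp (T c1) (T c2)).2) : ℕ × ℕ).1
          then (⟨((T.symm (sp (T c1) (T c2)).2) : ℕ × ℕ),
                  ((T.symm (sp (T c1) (T c2)).1) : ℕ × ℕ).1⟩ : (_ : ℕ × ℕ) × ℕ)
          else ⟨((T.symm (sp (T c1) (T c2)).1) : ℕ × ℕ),
                  ((T.symm (sp (T c1) (T c2)).2) : ℕ × ℕ).1⟩)
          = q := by
      intro c1 c2 h1 h2'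
      have hq2 : q.2 < q.1.1 := h2
      rcases sp_cases (T c1) (T c2) with h | h <;> rw [h]
      · simp only [Equiv.symm_apply_apply, h1, h2']
        rw [if_neg (by simpa using not_lt_of_gt hq2)]
      · simp only [Equiv.symm_apply_apply, h1, h2']
        rw [if_pos (by simpa using hq2)]
    exact hgen _ _ rfl rfl


lemma key (T : YNumbering μ N) :
    (∑ p ∈ Finset.univ.filter (fun p : Fin N × Fin N => p.1 < p.2),
        (fun β => vT μ T (β ∘ Equiv.swap p.1 p.2))) =
      ((∑ c ∈ μ.cells, ((c.2 : ℤ) - (c.1 : ℤ)) : ℤ) : ℂ) • vT μ T := by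
  classical
  set P := Finset.univ.filter (fun p : Fin N × Fin N => p.1 < p.2) with hP
  have hA : ∀ ρ : Equiv.Perm (Fin N), (fun β => vT μ T (β ∘ ρ))
      = ∑ σ ∈ colGroup μ T, ((Equiv.Perm.sign σ : ℤ) : ℂ) •
          eT μ (T.trans (σ.trans ρ)) := by
    intro ρ
    funext β
    rw [vT, Finset.sum_apply, Finset.sum_apply]
    refine Finset.sum_congr rfl fun σ _ => ?_
    simp only [Pi.smul_apply]
    rw [eT_comp, Equiv.trans_assoc]
  have step1 : (∑ p ∈ P, (fun β => vT μ T (β ∘ Equiv.swap p.1 p.2)))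
      = ∑ p ∈ P, ∑ σ ∈ colGroup μ T, ((Equiv.Perm.sign σ : ℤ) : ℂ) •
          eT μ (T.trans ((Equiv.swap p.1 p.2).trans σ)) := by
    rw [Finset.sum_congr rfl fun p _ => hA (Equiv.swap p.1 p.2)]
    rw [Finset.sum_comm]
    have hmid : ∀ σ ∈ colGroup μ T,
        (∑ p ∈ P, ((Equiv.Perm.sign σ : ℤ) : ℂ) •
          eT μ (T.trans (σ.trans (Equiv.swap p.1 p.2))))
        = ∑ p ∈ P, ((Equiv.Perm.sign σ : ℤ) : ℂ) •
          eT μ (T.trans ((Equiv.swap p.1 p.2).trans σ)) := by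
      intro σ _
      rw [← Finset.smul_sum, ← Finset.smul_sum, hP, conj_reindex]
    rw [Finset.sum_congr rfl hmid, Finset.sum_comm]
  rw [step1]
  set G : Fin N × Fin N → (Fin N → Fin (nRows μ)) → ℂ := fun p =>
    ∑ σ ∈ colGroup μ T, ((Equiv.Perm.sign σ : ℤ) : ℂ) •
      eT μ (T.trans ((Equiv.swap p.1 p.2).trans σ)) with hG
  have hsplit1 := (Finset.sum_filter_add_sum_filter_not P
    (fun p => ((T.symm p.1) : ℕ × ℕ).1 = ((T.symm p.2) : ℕ × ℕ).1) G).symm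
  have hsplit2 := (Finset.sum_filter_add_sum_filter_not
    (P.filter (fun p => ¬ ((T.symm p.1) : ℕ × ℕ).1 = ((T.symm p.2) : ℕ × ℕ).1))
    (fun p => ((T.symm p.1) : ℕ × ℕ).2 = ((T.symm p.2) : ℕ × ℕ).2) G).symm
  rw [hsplit1, hsplit2]
  -- row part
  have hrowpart : (∑ p ∈ P.filter
      (fun p => ((T.symm p.1) : ℕ × ℕ).1 = ((T.symm p.2) : ℕ × ℕ).1), G p)
      = (∑ c ∈ μ.cells, c.2) • vT μ T := by
    have h1 : ∀ p ∈ P.filter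
        (fun p => ((T.symm p.1) : ℕ × ℕ).1 = ((T.symm p.2) : ℕ × ℕ).1),
        G p = vT μ T := by
      intro p hp
      rw [Finset.mem_filter] at hp
      rw [hG]
      dsimp only
      rw [Finset.sum_congr rfl fun σ _ => by rw [eT_row_swap hp.2]]
      rfl
    rw [Finset.sum_congr rfl h1, Finset.sum_const]
    congr 1
    rw [hP, Finset.filter_filter]
    exact card_row T
  -- col part
  have hcolpart : (∑ p ∈ (P.filter
      (fun p => ¬ ((T.symm p.1) : ℕ × ℕ).1 = ((T.symm p.2) : ℕ × ℕ).1)).filter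
      (fun p => ((T.symm p.1) : ℕ × ℕ).2 = ((T.symm p.2) : ℕ × ℕ).2), G p)
      = (∑ c ∈ μ.cells, c.1) • (- vT μ T) := by
    have h1 : ∀ p ∈ (P.filter
        (fun p => ¬ ((T.symm p.1) : ℕ × ℕ).1 = ((T.symm p.2) : ℕ × ℕ).1)).filter
        (fun p => ((T.symm p.1) : ℕ × ℕ).2 = ((T.symm p.2) : ℕ × ℕ).2),
        G p = - vT μ T := by
      intro p hp
      rw [Finset.mem_filter, Finset.mem_filter, Finset.mem_filter] at hp
      obtain ⟨⟨⟨-, hlt⟩, -⟩, hcol⟩ := hp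
      exact G_col (ne_of_lt hlt) hcol
    rw [Finset.sum_congr rfl h1, Finset.sum_const]
    congr 1
    rw [Finset.filter_filter, hP, Finset.filter_filter]
    have hset : (Finset.univ.filter fun p : Fin N × Fin N =>
        p.1 < p.2 ∧ ¬ ((T.symm p.1) : ℕ × ℕ).1 = ((T.symm p.2) : ℕ × ℕ).1
          ∧ ((T.symm p.1) : ℕ × ℕ).2 = ((T.symm p.2) : ℕ × ℕ).2)
        = Finset.univ.filter fun p : Fin N × Fin N =>
        p.1 < p.2 ∧ ((T.symm p.1) : ℕ × ℕ).2 = ((T.symm p.2) : ℕ × ℕ).2 := by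
      refine Finset.filter_congr fun p _ => ?_
      constructor
      · rintro ⟨h1, -, h2⟩; exact ⟨h1, h2⟩
      · rintro ⟨h1, h2⟩
        refine ⟨h1, fun hrow => ?_, h2⟩
        exact absurd (T.symm.injective (Subtype.ext (Prod.ext hrow h2)))
          (ne_of_lt h1)
    rw [hset]
    exact card_col T
  -- mixed part
  have hmixpart : (∑ p ∈ ((P.filter
      (fun p => ¬ ((T.symm p.1) : ℕ × ℕ).1 = ((T.symm p.2) : ℕ × ℕ).1)).filter
      (fun p => ¬ ((T.symm p.1) : ℕ × ℕ).2 = ((T.symm p.2) : ℕ × ℕ).2)), G p)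
      = 0 := by
    apply Finset.sum_eq_zero
    intro p hp
    rw [Finset.mem_filter, Finset.mem_filter, Finset.mem_filter] at hp
    obtain ⟨⟨⟨-, hlt⟩, hrow⟩, hcol⟩ := hp
    rcases lt_or_gt_of_ne hrow with hr | hr
    · exact G_mixed hr hcol
    · rw [hG]
      dsimp only
      rw [Finset.sum_congr rfl fun σ _ => by rw [Equiv.swap_comm p.1 p.2]]
      exact G_mixed hr (Ne.symm hcol)
  rw [hrowpart, hcolpart, hmixpart, add_zero]
  have hfin : ∀ v : (Fin N → Fin (nRows μ)) → ℂ,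
      (∑ c ∈ μ.cells, c.2) • v + (∑ c ∈ μ.cells, c.1) • (-v)
        = ((∑ c ∈ μ.cells, ((c.2 : ℤ) - (c.1 : ℤ)) : ℤ) : ℂ) • v := by
    intro v
    rw [smul_neg, ← Nat.cast_smul_eq_nsmul ℂ (∑ c ∈ μ.cells, c.2) v,
      ← Nat.cast_smul_eq_nsmul ℂ (∑ c ∈ μ.cells, c.1) v,
      ← sub_eq_add_neg, ← sub_smul]
    congr 1
    push_cast [Finset.sum_sub_distrib]
    ring
  exact hfin (vT μ T)

end Frob

/-- Frobenius formula: on the Specht module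
`W^λ = span{v_T : T standard}`, the central element `Σ_{i<j} s_{ij}` acts by
the scalar `Σ_{b∈λ}(c(b)−r(b))`. -/
theorem stmt_7 (μ : YoungDiagram) (N : ℕ) (hN : μ.card = N)
    (w : (Fin N → Fin (nRows μ)) → ℂ)
    (hw : w ∈ Submodule.span ℂ
      {v | ∃ T : YNumbering μ N, IsStandard μ T ∧ v = vT μ T}) :
    (∑ p ∈ Finset.univ.filter (fun p : Fin N × Fin N => p.1 < p.2),
        (fun β => w (β ∘ Equiv.swap p.1 p.2))) =
      ((∑ c ∈ μ.cells, ((c.2 : ℤ) - (c.1 : ℤ)) : ℤ) : ℂ) • w := by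
  induction hw using Submodule.span_induction with
  | mem v hv =>
    obtain ⟨T, -, rfl⟩ := hv
    exact Frob.key T
  | zero =>
    rw [smul_zero]
    exact Finset.sum_eq_zero fun p _ => rfl
  | add x y hx hy ihx ihy =>
    have hxy : ∀ p : Fin N × Fin N,
        (fun β => (x + y) (β ∘ Equiv.swap p.1 p.2))
          = (fun β => x (β ∘ Equiv.swap p.1 p.2))
            + fun β => y (β ∘ Equiv.swap p.1 p.2) := fun p => rfl
    rw [Finset.sum_congr rfl fun p _ => hxy p, Finset.sum_add_distrib,
      ihx, ihy, smul_add]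
  | smul a x hx ih =>
    have hax : ∀ p : Fin N × Fin N,
        (fun β => (a • x) (β ∘ Equiv.swap p.1 p.2))
          = a • fun β => x (β ∘ Equiv.swap p.1 p.2) := fun p => rfl
    rw [Finset.sum_congr rfl fun p _ => hax p, ← Finset.smul_sum, ih,
      smul_comm]
end
end

section
/- Let m be a positive integer, N = 3, and let S_3 act on ℂ^3 by permuting coordinates; let W = {x ∈ ℂ^3 : x_1+x_2+x_3 = 0} with this action, and set v_T = ε_3 − ε_1, v_S = ε_2 − ε_1 in W, where ε_1, ε_2, ε_3 is the standard basis of ℂ^3. Let d'_{m,k} = binom(m,k)·(m−1)!·(m+k−1)!/(2m+k)!. Then the rational map φ_1(z_1,z_2,z_3) = (z_2−z_3)^{−2m} Σ_{k=0}^m (−1)^{m+k} d'_{m,k}((−m−k)v_T + k v_S)(z_1−z_2)^{−m−k}(z_1−z_3)^k is a solution of the KZ equation with values in W and parameter −m on all of C_3. -/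
open scoped BigOperators

noncomputable section

/-- The coefficient `d'_{m,k} = binom(m,k)·(m−1)!·(m+k−1)!/(2m+k)!`. -/
def dCoeff' (m k : ℕ) : ℂ :=
  (m.choose k : ℂ) * ((m - 1).factorial : ℂ) * ((m + k - 1).factorial : ℂ) /
    ((2 * m + k).factorial : ℂ)

/-- `v_T = ε_3 − ε_1`. -/
def vT3 : Fin 3 → ℂ := ![-1, 0, 1]

/-- `v_S = ε_2 − ε_1`. -/
def vS3 : Fin 3 → ℂ := ![-1, 1, 0]

/-- The solution `φ₁(z₁,z₂,z₃) = (z₂−z₃)^{−2m} Σ_{k=0}^m (−1)^{m+k} d'_{m,k}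
((−m−k)v_T + k v_S)(z₁−z₂)^{−m−k}(z₁−z₃)^k` (coordinates indexed by `0,1,2`). -/
def phi1 (m : ℕ) (z : Fin 3 → ℂ) : Fin 3 → ℂ :=
  (z 1 - z 2) ^ (-(2 * m : ℤ)) •
    ∑ k ∈ Finset.range (m + 1),
      ((-1 : ℂ) ^ (m + k) * dCoeff' m k * (z 0 - z 1) ^ (-(m : ℤ) - k) *
          (z 0 - z 2) ^ (k : ℤ)) •
        ((-(m : ℂ) - k) • vT3 + (k : ℂ) • vS3)

namespace KZaux

def cc (m k : ℕ) : ℂ := (-1 : ℂ) ^ (m + k) * dCoeff' m k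

def vec (m k : ℕ) : Fin 3 → ℂ := ![(m : ℂ), (k : ℂ), -(m : ℂ) - (k : ℂ)]

/-- The key recurrence for the coefficients. -/
lemma crec (m k : ℕ) (hk : k < m) :
    cc m (k + 1) * (((k : ℂ) + 1) * (2 * (m : ℂ) + k + 1)) +
      cc m k * (((m : ℂ) + k) * ((m : ℂ) - k)) = 0 := by
  have h1 : (2 * m + (k + 1)).factorial = (2 * m + k + 1) * (2 * m + k).factorial := by
    rw [show 2 * m + (k + 1) = (2 * m + k) + 1 by ring, Nat.factorial_succ]
  have h2 : (m + (k + 1) - 1) = (m + k - 1) + 1 := by omega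
  have h2' : (m + k - 1) + 1 = m + k := by omega
  have h3 : ((m + (k + 1) - 1).factorial : ℂ) = (m + k : ℂ) * ((m + k - 1).factorial : ℂ) := by
    rw [h2, Nat.factorial_succ, h2']
    push_cast
    ring
  have h4 : (m.choose (k + 1) : ℂ) * ((k : ℂ) + 1) = (m.choose k : ℂ) * ((m : ℂ) - k) := by
    have hc := congrArg (Nat.cast : ℕ → ℂ) (Nat.choose_succ_right_eq m k)
    push_cast [Nat.cast_sub hk.le] at hc
    linear_combination hc
  have hf1 : ((2 * m + k).factorial : ℂ) ≠ 0 := Nat.cast_ne_zero.2 (Nat.factorial_ne_zero _)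
  have hf2 : ((2 * m + (k + 1)).factorial : ℂ) ≠ 0 := Nat.cast_ne_zero.2 (Nat.factorial_ne_zero _)
  have hpow : (-1 : ℂ) ^ (m + (k + 1)) = -(-1 : ℂ) ^ (m + k) := by
    rw [show m + (k + 1) = (m + k) + 1 by ring, pow_succ]; ring
  have hd : dCoeff' m (k + 1) * (((k : ℂ) + 1) * (2 * (m : ℂ) + k + 1)) =
      dCoeff' m k * (((m : ℂ) + k) * ((m : ℂ) - k)) := by
    unfold dCoeff'
    rw [div_mul_eq_mul_div, div_mul_eq_mul_div, div_eq_div_iff hf2 hf1, h1, h3]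
    push_cast
    linear_combination (((m - 1).factorial : ℂ) * ((m + k - 1).factorial : ℂ) *
      (((m:ℂ) + k) * ((2*(m:ℂ)+k+1) * ((2*m+k).factorial : ℂ)))) * h4
  unfold cc
  rw [hpow]
  linear_combination (-(-1:ℂ)^(m+k)) * hd

/-- Summation lemma: shift-down form. -/
lemma sum_shift (m : ℕ) (a b M N : ℕ → ℂ)
    (hN : ∀ k, N (k + 1) = M k) (hb0 : b 0 * N 0 = 0) (ham : a m = 0)
    (h : ∀ k < m, a k + b (k + 1) = 0) :
    ∑ k ∈ Finset.range (m + 1), (a k * M k + b k * N k) = 0 := by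
  rw [Finset.sum_add_distrib, Finset.sum_range_succ, Finset.sum_range_succ']
  have : ∀ k ∈ Finset.range m, a k * M k = -(b (k+1) * N (k+1)) := by
    intro k hk
    rw [hN k]
    have := h k (Finset.mem_range.1 hk)
    linear_combination M k * this
  rw [Finset.sum_congr rfl this, ham, hb0, Finset.sum_neg_distrib]
  ring

/-- Summation lemma: shift-up form. -/
lemma sum_shift' (m : ℕ) (a b M : ℕ → ℂ)
    (ha0 : a 0 * M 0 = 0) (hbm : b m = 0) (h : ∀ k < m, a (k + 1) + b k = 0) :
    ∑ k ∈ Finset.range (m + 1), (a k * M k + b k * M (k + 1)) = 0 := by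
  rw [Finset.sum_add_distrib, Finset.sum_range_succ' (fun k => a k * M k),
    Finset.sum_range_succ (fun k => b k * M (k+1))]
  have : ∀ k ∈ Finset.range m, b k * M (k+1) = -(a (k+1) * M (k+1)) := by
    intro k hk
    have := h k (Finset.mem_range.1 hk)
    linear_combination M (k+1) * this
  rw [Finset.sum_congr rfl this, hbm, Finset.sum_neg_distrib, ha0]
  ring

end KZaux

namespace KZaux

def fm (m k : ℕ) (z : Fin 3 → ℂ) : ℂ :=
  cc m k * ((z 1 - z 2) ^ (-(2 * m : ℤ)) *
    ((z 0 - z 1) ^ (-(m : ℤ) - (k : ℤ)) * (z 0 - z 2) ^ (k : ℤ)))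

lemma vec_eq (m k : ℕ) :
    (-(m : ℂ) - k) • vT3 + (k : ℂ) • vS3 = vec m k := by
  funext l
  fin_cases l <;> (simp [vT3, vS3, vec]; try ring)

lemma phi1_eq (m : ℕ) (z : Fin 3 → ℂ) :
    phi1 m z = ∑ k ∈ Finset.range (m + 1), fm m k z • vec m k := by
  unfold phi1
  rw [Finset.smul_sum]
  refine Finset.sum_congr rfl fun k _ => ?_
  rw [smul_smul, vec_eq]
  congr 1
  unfold fm cc
  ring


def prj (i : Fin 3) : (Fin 3 → ℂ) →L[ℂ] ℂ := ContinuousLinearMap.proj i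

lemma hasFDerivAt_zpow_sub (a b : Fin 3) (n : ℤ) (z : Fin 3 → ℂ) (h : z a - z b ≠ 0) :
    HasFDerivAt (fun z : Fin 3 → ℂ => (z a - z b) ^ n)
      (((n : ℂ) * (z a - z b) ^ (n - 1)) • (prj a - prj b)) z := by
  have h1 : HasFDerivAt (fun z : Fin 3 → ℂ => z a - z b) (prj a - prj b) z :=
    ((prj a).hasFDerivAt).sub ((prj b).hasFDerivAt)
  exact (hasDerivAt_zpow n (z a - z b) (Or.inl h)).comp_hasFDerivAt z h1

lemma hasFDerivAt_fm (m k : ℕ) (z : Fin 3 → ℂ)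
    (h01 : z 0 - z 1 ≠ 0) (h02 : z 0 - z 2 ≠ 0) (h12 : z 1 - z 2 ≠ 0) :
    HasFDerivAt (fm m k)
      ((cc m k) • (((z 1 - z 2) ^ (-(2 * m : ℤ))) •
          (((z 0 - z 1) ^ (-(m : ℤ) - (k : ℤ))) •
              ((((k : ℤ) : ℂ) * (z 0 - z 2) ^ ((k : ℤ) - 1)) • (prj 0 - prj 2))
            + ((z 0 - z 2) ^ (k : ℤ)) •
              ((((-(m : ℤ) - (k : ℤ) : ℤ) : ℂ) * (z 0 - z 1) ^ (-(m : ℤ) - (k : ℤ) - 1)) •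
                (prj 0 - prj 1)))
        + ((z 0 - z 1) ^ (-(m : ℤ) - (k : ℤ)) * (z 0 - z 2) ^ (k : ℤ)) •
            (((Int.cast (-(2 * m : ℤ)) : ℂ) * (z 1 - z 2) ^ (-(2 * m : ℤ) - 1)) • (prj 1 - prj 2)))) z := by
  have hF := hasFDerivAt_zpow_sub 1 2 (-(2 * m : ℤ)) z h12
  have hU := hasFDerivAt_zpow_sub 0 1 (-(m : ℤ) - (k : ℤ)) z h01
  have hV := hasFDerivAt_zpow_sub 0 2 (k : ℤ) z h02
  have h := (hF.mul (hU.mul hV)).const_mul (cc m k)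
  unfold fm
  exact h

lemma differentiableAt_fm (m k : ℕ) (z : Fin 3 → ℂ)
    (h01 : z 0 - z 1 ≠ 0) (h02 : z 0 - z 2 ≠ 0) (h12 : z 1 - z 2 ≠ 0) :
    DifferentiableAt ℂ (fm m k) z :=
  (hasFDerivAt_fm m k z h01 h02 h12).differentiableAt

lemma hasFDerivAt_phi1 (m : ℕ) (z : Fin 3 → ℂ)
    (h01 : z 0 - z 1 ≠ 0) (h02 : z 0 - z 2 ≠ 0) (h12 : z 1 - z 2 ≠ 0) :
    HasFDerivAt (phi1 m)
      (∑ k ∈ Finset.range (m + 1),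
        (fderiv ℂ (fm m k) z).smulRight (vec m k)) z := by
  have : phi1 m = fun z => ∑ k ∈ Finset.range (m + 1), fm m k z • vec m k := by
    funext z; exact phi1_eq m z
  rw [this]
  exact HasFDerivAt.fun_sum fun k _ =>
    ((differentiableAt_fm m k z h01 h02 h12).hasFDerivAt).smul_const (vec m k)

lemma fderiv_phi1_apply (m : ℕ) (z : Fin 3 → ℂ)
    (h01 : z 0 - z 1 ≠ 0) (h02 : z 0 - z 2 ≠ 0) (h12 : z 1 - z 2 ≠ 0) (i : Fin 3) :
    fderiv ℂ (phi1 m) z (Pi.single i 1) =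
      ∑ k ∈ Finset.range (m + 1),
        (fderiv ℂ (fm m k) z (Pi.single i 1)) • vec m k := by
  rw [(hasFDerivAt_phi1 m z h01 h02 h12).fderiv]
  simp [ContinuousLinearMap.sum_apply]

lemma fderiv_fm_apply (m k : ℕ) (z : Fin 3 → ℂ)
    (h01 : z 0 - z 1 ≠ 0) (h02 : z 0 - z 2 ≠ 0) (h12 : z 1 - z 2 ≠ 0) (i : Fin 3) :
    fderiv ℂ (fm m k) z (Pi.single i 1) =
      cc m k * (
        ((Pi.single i 1 : Fin 3 → ℂ) 1 - (Pi.single i 1 : Fin 3 → ℂ) 2) *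
          ((-(2 * (m : ℂ))) * (z 1 - z 2) ^ (-(2 * m : ℤ) - 1)) *
          ((z 0 - z 1) ^ (-(m : ℤ) - (k : ℤ)) * (z 0 - z 2) ^ (k : ℤ))
        + (z 1 - z 2) ^ (-(2 * m : ℤ)) *
          ( ((Pi.single i 1 : Fin 3 → ℂ) 0 - (Pi.single i 1 : Fin 3 → ℂ) 1) *
              ((-(m : ℂ) - k) * (z 0 - z 1) ^ (-(m : ℤ) - (k : ℤ) - 1)) * (z 0 - z 2) ^ (k : ℤ)
          + ((Pi.single i 1 : Fin 3 → ℂ) 0 - (Pi.single i 1 : Fin 3 → ℂ) 2) *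
              ((k : ℂ) * (z 0 - z 2) ^ ((k : ℤ) - 1)) * (z 0 - z 1) ^ (-(m : ℤ) - (k : ℤ)) ) ) := by
  rw [(hasFDerivAt_fm m k z h01 h02 h12).fderiv]
  simp only [ContinuousLinearMap.add_apply, ContinuousLinearMap.smul_apply,
    ContinuousLinearMap.sub_apply, smul_eq_mul, prj, ContinuousLinearMap.proj_apply]
  push_cast
  ring


lemma hD0 (m k : ℕ) (z : Fin 3 → ℂ)
    (h01 : z 0 - z 1 ≠ 0) (h02 : z 0 - z 2 ≠ 0) (h12 : z 1 - z 2 ≠ 0) :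
    fderiv ℂ (fm m k) z (Pi.single (0 : Fin 3) 1) =
      cc m k * ((z 1 - z 2) ^ (-(2 * m : ℤ)) *
        ((-(m : ℂ) - k) * ((z 0 - z 1) ^ (-(m : ℤ) - (k : ℤ) - 1) * (z 0 - z 2) ^ (k : ℤ))
          + (k : ℂ) * ((z 0 - z 1) ^ (-(m : ℤ) - (k : ℤ)) * (z 0 - z 2) ^ ((k : ℤ) - 1)))) := by
  rw [fderiv_fm_apply m k z h01 h02 h12 0]
  rw [Pi.single_eq_same, Pi.single_eq_of_ne (by decide : (1 : Fin 3) ≠ 0),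
    Pi.single_eq_of_ne (by decide : (2 : Fin 3) ≠ 0)]
  ring

lemma vec0 (m k : ℕ) : vec m k 0 = (m : ℂ) := by simp [vec]
lemma vec1 (m k : ℕ) : vec m k 1 = (k : ℂ) := by simp [vec]
lemma vec2 (m k : ℕ) : vec m k 2 = -(m : ℂ) - k := by simp [vec]

lemma zsplit {a : ℂ} (ha : a ≠ 0) {n p : ℤ} (h : n = p + 1) : a ^ n = a ^ p * a := by
  rw [h, zpow_add_one₀ ha]

lemma filt0 : Finset.univ.filter (fun j => j ≠ (0 : Fin 3)) = {1, 2} := by decide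

set_option maxHeartbeats 2000000 in
lemma kz0 (m : ℕ) (z : Fin 3 → ℂ)
    (h01 : z 0 - z 1 ≠ 0) (h02 : z 0 - z 2 ≠ 0) (h12 : z 1 - z 2 ≠ 0) :
    fderiv ℂ (phi1 m) z (Pi.single (0 : Fin 3) 1) =
      (-(m : ℂ)) • ∑ j ∈ Finset.univ.filter (fun j => j ≠ (0 : Fin 3)),
        (z 0 - z j)⁻¹ • ((phi1 m z ∘ ⇑(Equiv.swap (0 : Fin 3) j)⁻¹) + phi1 m z) := by
  have hd : ∀ k, fderiv ℂ (fm m k) z (Pi.single (0 : Fin 3) 1) =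
      cc m k * ((z 1 - z 2) ^ (-(2 * m : ℤ)) *
        ((-(m : ℂ) - k) * ((z 0 - z 1) ^ (-(m : ℤ) - (k : ℤ) - 1) * (z 0 - z 2) ^ (k : ℤ))
          + (k : ℂ) * ((z 0 - z 1) ^ (-(m : ℤ) - (k : ℤ)) * (z 0 - z 2) ^ ((k : ℤ) - 1)))) :=
    fun k => hD0 m k z h01 h02 h12
  rw [fderiv_phi1_apply m z h01 h02 h12 0, filt0,
    Finset.sum_pair (by decide : (1 : Fin 3) ≠ 2)]
  simp only [hd]
  funext l
  have hs1 : ∀ l : Fin 3, (phi1 m z ∘ ⇑(Equiv.swap (0 : Fin 3) 1)⁻¹) l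
      = phi1 m z (Equiv.swap (0 : Fin 3) 1 l) := by
    intro l; simp [Equiv.swap_inv]
  have hs2 : ∀ l : Fin 3, (phi1 m z ∘ ⇑(Equiv.swap (0 : Fin 3) 2)⁻¹) l
      = phi1 m z (Equiv.swap (0 : Fin 3) 2 l) := by
    intro l; simp [Equiv.swap_inv]
  have sw1 : ∀ l : Fin 3, Equiv.swap (0 : Fin 3) 1 l = ![1, 0, 2] l := by decide
  have sw2 : ∀ l : Fin 3, Equiv.swap (0 : Fin 3) 2 l = ![2, 1, 0] l := by decide
  have su : ∀ k : ℕ, (z 0 - z 1) ^ (-(m : ℤ) - (k : ℤ)) =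
      (z 0 - z 1) ^ (-(m : ℤ) - (k : ℤ) - 1) * (z 0 - z 1) :=
    fun k => zsplit h01 (by ring)
  have sv : ∀ k : ℕ, (z 0 - z 2) ^ (k : ℤ) =
      (z 0 - z 2) ^ ((k : ℤ) - 1) * (z 0 - z 2) :=
    fun k => zsplit h02 (by ring)
  fin_cases l <;>
    simp only [Fin.zero_eta, Fin.mk_one, Fin.reduceFinMk, Finset.sum_apply, Pi.smul_apply,
      Pi.add_apply, smul_eq_mul, hs1, hs2, sw1, sw2, Matrix.cons_val_zero, Matrix.cons_val_one,
      Matrix.head_cons, Matrix.cons_val_two, Matrix.tail_cons] <;>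
    simp only [phi1_eq, Finset.sum_apply, Pi.smul_apply, smul_eq_mul, Pi.add_apply,
      Matrix.cons_val_zero, Matrix.cons_val_one, Matrix.head_cons, Matrix.cons_val_two,
      Matrix.tail_cons, vec0, vec1, vec2, fm] <;>
    rw [← sub_eq_zero] <;>
    simp only [Finset.mul_sum, ← Finset.sum_add_distrib, ← Finset.sum_neg_distrib,
      ← Finset.sum_sub_distrib]
  case _ =>
    generalize (z 1 - z 2) ^ (-(2 * m : ℤ)) = C
    refine Finset.sum_eq_zero fun k hk => ?_
    rw [su k, sv k]
    field_simp [h01, h02]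
    ring
  case _ =>
    generalize (z 1 - z 2) ^ (-(2 * m : ℤ)) = C
    refine Eq.trans (Finset.sum_congr rfl fun k hk => ?_)
      (sum_shift m (fun k => cc m k * (((m : ℂ) + k) * ((m : ℂ) - k)))
        (fun k => cc m k * ((k : ℂ) * ((k : ℂ) + 2 * m)))
        (fun k => C * ((z 0 - z 1) ^ (-(m : ℤ) - (k : ℤ) - 1) * (z 0 - z 2) ^ (k : ℤ)))
        (fun k => C * ((z 0 - z 1) ^ (-(m : ℤ) - (k : ℤ)) * (z 0 - z 2) ^ ((k : ℤ) - 1)))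
        ?_ ?_ ?_ ?_)
    · rw [su k, sv k]
      field_simp [h01, h02]
      ring
    · intro k
      rw [show (-(m : ℤ) - ((k + 1 : ℕ) : ℤ)) = -(m : ℤ) - (k : ℤ) - 1 by push_cast; ring,
        show (((k + 1 : ℕ) : ℤ) - 1) = (k : ℤ) by push_cast; ring]
    · simp
    · simp
    · intro k hk
      push_cast
      linear_combination crec m k hk
  case _ =>
    generalize (z 1 - z 2) ^ (-(2 * m : ℤ)) = C
    refine Eq.trans (Finset.sum_congr rfl fun k hk => ?_)
      (sum_shift m (fun k => -(cc m k * (((m : ℂ) + k) * ((m : ℂ) - k))))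
        (fun k => -(cc m k * ((k : ℂ) * ((k : ℂ) + 2 * m))))
        (fun k => C * ((z 0 - z 1) ^ (-(m : ℤ) - (k : ℤ) - 1) * (z 0 - z 2) ^ (k : ℤ)))
        (fun k => C * ((z 0 - z 1) ^ (-(m : ℤ) - (k : ℤ)) * (z 0 - z 2) ^ ((k : ℤ) - 1)))
        ?_ ?_ ?_ ?_)
    · rw [su k, sv k]
      field_simp [h01, h02]
      ring
    · intro k
      rw [show (-(m : ℤ) - ((k + 1 : ℕ) : ℤ)) = -(m : ℤ) - (k : ℤ) - 1 by push_cast; ring,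
        show (((k + 1 : ℕ) : ℤ) - 1) = (k : ℤ) by push_cast; ring]
    · simp
    · simp
    · intro k hk
      push_cast
      linear_combination -(crec m k hk)


lemma hD1 (m k : ℕ) (z : Fin 3 → ℂ)
    (h01 : z 0 - z 1 ≠ 0) (h02 : z 0 - z 2 ≠ 0) (h12 : z 1 - z 2 ≠ 0) :
    fderiv ℂ (fm m k) z (Pi.single (1 : Fin 3) 1) =
      cc m k * (-(2 * (m : ℂ)) * ((z 1 - z 2) ^ (-(2 * m : ℤ) - 1) *
          ((z 0 - z 1) ^ (-(m : ℤ) - (k : ℤ)) * (z 0 - z 2) ^ (k : ℤ)))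
        + ((m : ℂ) + k) * ((z 1 - z 2) ^ (-(2 * m : ℤ)) *
          ((z 0 - z 1) ^ (-(m : ℤ) - (k : ℤ) - 1) * (z 0 - z 2) ^ (k : ℤ)))) := by
  rw [fderiv_fm_apply m k z h01 h02 h12 1]
  rw [Pi.single_eq_same, Pi.single_eq_of_ne (by decide : (0 : Fin 3) ≠ 1),
    Pi.single_eq_of_ne (by decide : (2 : Fin 3) ≠ 1)]
  push_cast
  ring

lemma hD2 (m k : ℕ) (z : Fin 3 → ℂ)
    (h01 : z 0 - z 1 ≠ 0) (h02 : z 0 - z 2 ≠ 0) (h12 : z 1 - z 2 ≠ 0) :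
    fderiv ℂ (fm m k) z (Pi.single (2 : Fin 3) 1) =
      cc m k * (2 * (m : ℂ) * ((z 1 - z 2) ^ (-(2 * m : ℤ) - 1) *
          ((z 0 - z 1) ^ (-(m : ℤ) - (k : ℤ)) * (z 0 - z 2) ^ (k : ℤ)))
        - (k : ℂ) * ((z 1 - z 2) ^ (-(2 * m : ℤ)) *
          ((z 0 - z 1) ^ (-(m : ℤ) - (k : ℤ)) * (z 0 - z 2) ^ ((k : ℤ) - 1)))) := by
  rw [fderiv_fm_apply m k z h01 h02 h12 2]
  rw [Pi.single_eq_same, Pi.single_eq_of_ne (by decide : (0 : Fin 3) ≠ 2),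
    Pi.single_eq_of_ne (by decide : (1 : Fin 3) ≠ 2)]
  push_cast
  ring

lemma filt1 : Finset.univ.filter (fun j => j ≠ (1 : Fin 3)) = {0, 2} := by decide

lemma filt2 : Finset.univ.filter (fun j => j ≠ (2 : Fin 3)) = {0, 1} := by decide

set_option maxHeartbeats 2000000 in
lemma kz1 (m : ℕ) (z : Fin 3 → ℂ)
    (h01 : z 0 - z 1 ≠ 0) (h02 : z 0 - z 2 ≠ 0) (h12 : z 1 - z 2 ≠ 0) :
    fderiv ℂ (phi1 m) z (Pi.single (1 : Fin 3) 1) =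
      (-(m : ℂ)) • ∑ j ∈ Finset.univ.filter (fun j => j ≠ (1 : Fin 3)),
        (z 1 - z j)⁻¹ • ((phi1 m z ∘ ⇑(Equiv.swap (1 : Fin 3) j)⁻¹) + phi1 m z) := by
  have hvu : (z 0 - z 2) - (z 0 - z 1) ≠ 0 := fun h => h12 (by linear_combination h)
  have hd : ∀ k, fderiv ℂ (fm m k) z (Pi.single (1 : Fin 3) 1) =
      cc m k * (-(2 * (m : ℂ)) * ((z 1 - z 2) ^ (-(2 * m : ℤ) - 1) *
          ((z 0 - z 1) ^ (-(m : ℤ) - (k : ℤ)) * (z 0 - z 2) ^ (k : ℤ)))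
        + ((m : ℂ) + k) * ((z 1 - z 2) ^ (-(2 * m : ℤ)) *
          ((z 0 - z 1) ^ (-(m : ℤ) - (k : ℤ) - 1) * (z 0 - z 2) ^ (k : ℤ)))) :=
    fun k => hD1 m k z h01 h02 h12
  rw [fderiv_phi1_apply m z h01 h02 h12 1, filt1,
    Finset.sum_pair (by decide : (0 : Fin 3) ≠ 2)]
  simp only [hd]
  funext l
  have hs1 : ∀ l : Fin 3, (phi1 m z ∘ ⇑(Equiv.swap (1 : Fin 3) 0)⁻¹) l
      = phi1 m z (Equiv.swap (1 : Fin 3) 0 l) := by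
    intro l; simp [Equiv.swap_inv]
  have hs2 : ∀ l : Fin 3, (phi1 m z ∘ ⇑(Equiv.swap (1 : Fin 3) 2)⁻¹) l
      = phi1 m z (Equiv.swap (1 : Fin 3) 2 l) := by
    intro l; simp [Equiv.swap_inv]
  have sw1 : ∀ l : Fin 3, Equiv.swap (1 : Fin 3) 0 l = ![1, 0, 2] l := by decide
  have sw2 : ∀ l : Fin 3, Equiv.swap (1 : Fin 3) 2 l = ![0, 2, 1] l := by decide
  have su : ∀ k : ℕ, (z 0 - z 1) ^ (-(m : ℤ) - (k : ℤ)) =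
      (z 0 - z 1) ^ (-(m : ℤ) - (k : ℤ) - 1) * (z 0 - z 1) :=
    fun k => zsplit h01 (by ring)
  have sv : ∀ k : ℕ, (z 0 - z 2) ^ ((k : ℤ) + 1) =
      (z 0 - z 2) ^ (k : ℤ) * (z 0 - z 2) :=
    fun k => zsplit h02 (by ring)
  have hw3 : (z 1 - z 2) ^ (-(2 * m : ℤ)) =
      ((z 0 - z 2) - (z 0 - z 1)) * (z 1 - z 2) ^ (-(2 * m : ℤ) - 1) := by
    rw [zsplit h12 (show -(2 * m : ℤ) = (-(2 * m : ℤ) - 1) + 1 by ring)]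
    ring
  have hi0 : (z 1 - z 0)⁻¹ = -(z 0 - z 1)⁻¹ := by
    rw [show z 1 - z 0 = -(z 0 - z 1) by ring, inv_neg]
  have hi2 : (z 1 - z 2)⁻¹ = ((z 0 - z 2) - (z 0 - z 1))⁻¹ := by
    rw [show z 1 - z 2 = (z 0 - z 2) - (z 0 - z 1) by ring]
  fin_cases l <;>
    simp only [Fin.zero_eta, Fin.mk_one, Fin.reduceFinMk, Finset.sum_apply, Pi.smul_apply,
      Pi.add_apply, smul_eq_mul, hs1, hs2, sw1, sw2, Matrix.cons_val_zero, Matrix.cons_val_one,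
      Matrix.head_cons, Matrix.cons_val_two, Matrix.tail_cons] <;>
    simp only [phi1_eq, Finset.sum_apply, Pi.smul_apply, smul_eq_mul, Pi.add_apply,
      Matrix.cons_val_zero, Matrix.cons_val_one, Matrix.head_cons, Matrix.cons_val_two,
      Matrix.tail_cons, vec0, vec1, vec2, fm] <;>
    simp only [hw3, hi0, hi2] <;>
    rw [← sub_eq_zero] <;>
    simp only [Finset.mul_sum, ← Finset.sum_add_distrib, ← Finset.sum_neg_distrib,
      ← Finset.sum_sub_distrib] <;>
    generalize (z 1 - z 2) ^ (-(2 * m : ℤ) - 1) = C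
  case _ =>
    refine Finset.sum_eq_zero fun k hk => ?_
    rw [su k]
    field_simp [h01, h02, hvu]
    ring
  case _ =>
    refine Eq.trans (Finset.sum_congr rfl fun k hk => ?_)
      (sum_shift' m (fun k => -(cc m k * ((k : ℂ) * (2 * (m : ℂ) + k))))
        (fun k => cc m k * (((m : ℂ) + k) * ((k : ℂ) - m)))
        (fun k => C * ((z 0 - z 1) ^ (-(m : ℤ) - (k : ℤ)) * (z 0 - z 2) ^ (k : ℤ)))
        ?_ ?_ ?_)
    · rw [show (-(m : ℤ) - ((k + 1 : ℕ) : ℤ)) = -(m : ℤ) - (k : ℤ) - 1 by push_cast; ring,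
        show (((k + 1 : ℕ) : ℤ)) = (k : ℤ) + 1 by push_cast; ring, su k, sv k]
      field_simp [h01, h02, hvu]
      ring
    · simp
    · simp
    · intro k hk
      push_cast
      linear_combination -(crec m k hk)
  case _ =>
    refine Eq.trans (Finset.sum_congr rfl fun k hk => ?_)
      (sum_shift' m (fun k => cc m k * ((k : ℂ) * (2 * (m : ℂ) + k)))
        (fun k => cc m k * (((m : ℂ) + k) * ((m : ℂ) - k)))
        (fun k => C * ((z 0 - z 1) ^ (-(m : ℤ) - (k : ℤ)) * (z 0 - z 2) ^ (k : ℤ)))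
        ?_ ?_ ?_)
    · rw [show (-(m : ℤ) - ((k + 1 : ℕ) : ℤ)) = -(m : ℤ) - (k : ℤ) - 1 by push_cast; ring,
        show (((k + 1 : ℕ) : ℤ)) = (k : ℤ) + 1 by push_cast; ring, su k, sv k]
      field_simp [h01, h02, hvu]
      ring
    · simp
    · simp
    · intro k hk
      push_cast
      linear_combination crec m k hk

set_option maxHeartbeats 2000000 in
lemma kz2 (m : ℕ) (z : Fin 3 → ℂ)
    (h01 : z 0 - z 1 ≠ 0) (h02 : z 0 - z 2 ≠ 0) (h12 : z 1 - z 2 ≠ 0) :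
    fderiv ℂ (phi1 m) z (Pi.single (2 : Fin 3) 1) =
      (-(m : ℂ)) • ∑ j ∈ Finset.univ.filter (fun j => j ≠ (2 : Fin 3)),
        (z 2 - z j)⁻¹ • ((phi1 m z ∘ ⇑(Equiv.swap (2 : Fin 3) j)⁻¹) + phi1 m z) := by
  have hvu : (z 0 - z 2) - (z 0 - z 1) ≠ 0 := fun h => h12 (by linear_combination h)
  have hd : ∀ k, fderiv ℂ (fm m k) z (Pi.single (2 : Fin 3) 1) =
      cc m k * (2 * (m : ℂ) * ((z 1 - z 2) ^ (-(2 * m : ℤ) - 1) *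
          ((z 0 - z 1) ^ (-(m : ℤ) - (k : ℤ)) * (z 0 - z 2) ^ (k : ℤ)))
        - (k : ℂ) * ((z 1 - z 2) ^ (-(2 * m : ℤ)) *
          ((z 0 - z 1) ^ (-(m : ℤ) - (k : ℤ)) * (z 0 - z 2) ^ ((k : ℤ) - 1)))) :=
    fun k => hD2 m k z h01 h02 h12
  rw [fderiv_phi1_apply m z h01 h02 h12 2, filt2,
    Finset.sum_pair (by decide : (0 : Fin 3) ≠ 1)]
  simp only [hd]
  funext l
  have hs1 : ∀ l : Fin 3, (phi1 m z ∘ ⇑(Equiv.swap (2 : Fin 3) 0)⁻¹) l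
      = phi1 m z (Equiv.swap (2 : Fin 3) 0 l) := by
    intro l; simp [Equiv.swap_inv]
  have hs2 : ∀ l : Fin 3, (phi1 m z ∘ ⇑(Equiv.swap (2 : Fin 3) 1)⁻¹) l
      = phi1 m z (Equiv.swap (2 : Fin 3) 1 l) := by
    intro l; simp [Equiv.swap_inv]
  have sw1 : ∀ l : Fin 3, Equiv.swap (2 : Fin 3) 0 l = ![2, 1, 0] l := by decide
  have sw2 : ∀ l : Fin 3, Equiv.swap (2 : Fin 3) 1 l = ![0, 2, 1] l := by decide
  have su : ∀ k : ℕ, (z 0 - z 1) ^ (-(m : ℤ) - (k : ℤ) + 1) =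
      (z 0 - z 1) ^ (-(m : ℤ) - (k : ℤ)) * (z 0 - z 1) :=
    fun k => zsplit h01 (by ring)
  have sv : ∀ k : ℕ, (z 0 - z 2) ^ ((k : ℤ)) =
      (z 0 - z 2) ^ ((k : ℤ) - 1) * (z 0 - z 2) :=
    fun k => zsplit h02 (by ring)
  have hw3 : (z 1 - z 2) ^ (-(2 * m : ℤ)) =
      ((z 0 - z 2) - (z 0 - z 1)) * (z 1 - z 2) ^ (-(2 * m : ℤ) - 1) := by
    rw [zsplit h12 (show -(2 * m : ℤ) = (-(2 * m : ℤ) - 1) + 1 by ring)]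
    ring
  have hi0 : (z 2 - z 0)⁻¹ = -(z 0 - z 2)⁻¹ := by
    rw [show z 2 - z 0 = -(z 0 - z 2) by ring, inv_neg]
  have hi1 : (z 2 - z 1)⁻¹ = -((z 0 - z 2) - (z 0 - z 1))⁻¹ := by
    rw [show z 2 - z 1 = -((z 0 - z 2) - (z 0 - z 1)) by ring, inv_neg]
  fin_cases l <;>
    simp only [Fin.zero_eta, Fin.mk_one, Fin.reduceFinMk, Finset.sum_apply, Pi.smul_apply,
      Pi.add_apply, smul_eq_mul, hs1, hs2, sw1, sw2, Matrix.cons_val_zero, Matrix.cons_val_one,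
      Matrix.head_cons, Matrix.cons_val_two, Matrix.tail_cons] <;>
    simp only [phi1_eq, Finset.sum_apply, Pi.smul_apply, smul_eq_mul, Pi.add_apply,
      Matrix.cons_val_zero, Matrix.cons_val_one, Matrix.head_cons, Matrix.cons_val_two,
      Matrix.tail_cons, vec0, vec1, vec2, fm] <;>
    simp only [hw3, hi0, hi1] <;>
    rw [← sub_eq_zero] <;>
    simp only [Finset.mul_sum, ← Finset.sum_add_distrib, ← Finset.sum_neg_distrib,
      ← Finset.sum_sub_distrib] <;>
    generalize (z 1 - z 2) ^ (-(2 * m : ℤ) - 1) = C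
  case _ =>
    refine Finset.sum_eq_zero fun k hk => ?_
    rw [sv k]
    field_simp [h01, h02, hvu]
    ring
  case _ =>
    refine Eq.trans (Finset.sum_congr rfl fun k hk => ?_)
      (sum_shift m (fun k => cc m k * (((m : ℂ) - k) * ((m : ℂ) + k)))
        (fun k => cc m k * ((k : ℂ) * ((k : ℂ) + 2 * m)))
        (fun k => C * ((z 0 - z 1) ^ (-(m : ℤ) - (k : ℤ)) * (z 0 - z 2) ^ (k : ℤ)))
        (fun k => C * ((z 0 - z 1) ^ (-(m : ℤ) - (k : ℤ) + 1) * (z 0 - z 2) ^ ((k : ℤ) - 1)))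
        ?_ ?_ ?_ ?_)
    · rw [su k, sv k]
      field_simp [h01, h02, hvu]
      ring
    · intro k
      rw [show (-(m : ℤ) - ((k + 1 : ℕ) : ℤ) + 1) = -(m : ℤ) - (k : ℤ) by push_cast; ring,
        show (((k + 1 : ℕ) : ℤ) - 1) = (k : ℤ) by push_cast; ring]
    · simp
    · simp
    · intro k hk
      push_cast
      linear_combination crec m k hk
  case _ =>
    refine Eq.trans (Finset.sum_congr rfl fun k hk => ?_)
      (sum_shift m (fun k => -(cc m k * (((m : ℂ) - k) * ((m : ℂ) + k))))
        (fun k => -(cc m k * ((k : ℂ) * ((k : ℂ) + 2 * m))))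
        (fun k => C * ((z 0 - z 1) ^ (-(m : ℤ) - (k : ℤ)) * (z 0 - z 2) ^ (k : ℤ)))
        (fun k => C * ((z 0 - z 1) ^ (-(m : ℤ) - (k : ℤ) + 1) * (z 0 - z 2) ^ ((k : ℤ) - 1)))
        ?_ ?_ ?_ ?_)
    · rw [su k, sv k]
      field_simp [h01, h02, hvu]
      ring
    · intro k
      rw [show (-(m : ℤ) - ((k + 1 : ℕ) : ℤ) + 1) = -(m : ℤ) - (k : ℤ) by push_cast; ring,
        show (((k + 1 : ℕ) : ℤ) - 1) = (k : ℤ) by push_cast; ring]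
    · simp
    · simp
    · intro k hk
      push_cast
      linear_combination -(crec m k hk)

end KZaux


/-- for a positive integer `m`, `φ₁` takes values in the
reflection representation `W = {x ∈ ℂ³ : x₁+x₂+x₃ = 0}` (with `S₃` permuting
coordinates) and is a solution of the KZ equation with parameter `−m` on `C₃`. -/
theorem stmt_12 (m : ℕ) (hm : 0 < m) :
    (∀ z : Fin 3 → ℂ, phi1 m z 0 + phi1 m z 1 + phi1 m z 2 = 0) ∧
    IsKZSol (fun (g : Equiv.Perm (Fin 3)) (x : Fin 3 → ℂ) => x ∘ ⇑g⁻¹)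
      (-(m : ℂ)) (Cconf 3) (phi1 m) := by
  refine ⟨?_, ?_, ?_⟩
  · intro z
    simp only [KZaux.phi1_eq, Finset.sum_apply, Pi.smul_apply, smul_eq_mul,
      KZaux.vec0, KZaux.vec1, KZaux.vec2]
    rw [← Finset.sum_add_distrib, ← Finset.sum_add_distrib]
    exact Finset.sum_eq_zero fun k hk => by ring
  · intro z hz
    have h01 : z 0 - z 1 ≠ 0 := sub_ne_zero_of_ne (hz 0 1 (by decide))
    have h02 : z 0 - z 2 ≠ 0 := sub_ne_zero_of_ne (hz 0 2 (by decide))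
    have h12 : z 1 - z 2 ≠ 0 := sub_ne_zero_of_ne (hz 1 2 (by decide))
    exact ((KZaux.hasFDerivAt_phi1 m z h01 h02 h12).differentiableAt).differentiableWithinAt
  · intro z hz i
    have h01 : z 0 - z 1 ≠ 0 := sub_ne_zero_of_ne (hz 0 1 (by decide))
    have h02 : z 0 - z 2 ≠ 0 := sub_ne_zero_of_ne (hz 0 2 (by decide))
    have h12 : z 1 - z 2 ≠ 0 := sub_ne_zero_of_ne (hz 1 2 (by decide))
    fin_cases i
    · exact KZaux.kz0 m z h01 h02 h12
    · exact KZaux.kz1 m z h01 h02 h12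
    · exact KZaux.kz2 m z h01 h02 h12
end
end

section
/- For every positive integer m and every integer k with 0 ≤ k ≤ m, the rational numbers (k/m)·binom(m+k−1,k)·binom(2m−k−1,m−k) and ((m−k)/m)·binom(m+k−1,k)·binom(2m−k−1,m−k) are integers. Equivalently, with d_{m,k} = −(1/m)·binom(−m,k)·binom(−m,m−k), the numbers k·d_{m,k} and (m−k)·d_{m,k} are integers for all 0 ≤ k ≤ m. -/
open scoped BigOperators

noncomputable section

/-- The generalized binomial coefficient `binom(−m, k) = (−m)(−m−1)⋯(−m−k+1)/k!`
as a rational number. -/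
def negBinomQ (m k : ℕ) : ℚ :=
  (∏ t ∈ Finset.range k, (-(m : ℚ) - t)) / (k.factorial : ℚ)

/-- The coefficient `d_{m,k} = −(1/m)·binom(−m,k)·binom(−m,m−k)`. -/
def dCoeffQ (m k : ℕ) : ℚ :=
  -(1 / (m : ℚ)) * negBinomQ m k * negBinomQ m (m - k)

lemma prod_range_add_eq_asc (m k : ℕ) :
    (∏ t ∈ Finset.range k, ((m : ℚ) + t)) = (m.ascFactorial k : ℚ) := by
  induction k with
  | zero => simp
  | succ n ih =>
    rw [Finset.prod_range_succ, ih, Nat.ascFactorial_succ]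
    push_cast
    ring

lemma negBinomQ_eq (m k : ℕ) :
    negBinomQ m k = (-1) ^ k * ((m + k - 1).choose k : ℚ) := by
  have h1 : (∏ t ∈ Finset.range k, (-(m : ℚ) - t))
      = (-1) ^ k * ∏ t ∈ Finset.range k, ((m : ℚ) + t) := by
    rw [show ((-1 : ℚ)) ^ k = ∏ _t ∈ Finset.range k, (-1 : ℚ) by simp,
      ← Finset.prod_mul_distrib]
    exact Finset.prod_congr rfl fun t _ => by ring
  rw [negBinomQ, h1, prod_range_add_eq_asc, Nat.ascFactorial_eq_factorial_mul_choose']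
  have hf : (k.factorial : ℚ) ≠ 0 := by exact_mod_cast k.factorial_ne_zero
  push_cast
  field_simp

/-- for `0 ≤ k ≤ m` the rational numbers
`(k/m)·C(m+k−1,k)·C(2m−k−1,m−k)` and `((m−k)/m)·C(m+k−1,k)·C(2m−k−1,m−k)`
are integers; equivalently `k·d_{m,k}` and `(m−k)·d_{m,k}` are integers. -/
theorem stmt_13 (m k : ℕ) (hm : 0 < m) (hk : k ≤ m) :
    (∃ a : ℤ, ((k : ℚ) / (m : ℚ)) * ((m + k - 1).choose k : ℚ) *
      ((2 * m - k - 1).choose (m - k) : ℚ) = (a : ℚ)) ∧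
    (∃ a : ℤ, (((m - k : ℕ) : ℚ) / (m : ℚ)) * ((m + k - 1).choose k : ℚ) *
      ((2 * m - k - 1).choose (m - k) : ℚ) = (a : ℚ)) ∧
    (∃ a : ℤ, (k : ℚ) * dCoeffQ m k = (a : ℚ)) ∧
    (∃ a : ℤ, ((m - k : ℕ) : ℚ) * dCoeffQ m k = (a : ℚ)) := by
  have hm0 : (m : ℚ) ≠ 0 := by positivity
  have key1 : ∀ j : ℕ, ((j : ℚ) + 1) * ((m + (j + 1) - 1).choose (j + 1) : ℚ)
      = (m : ℚ) * ((m + (j + 1) - 1).choose j : ℚ) := by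
    intro j
    have h := Nat.choose_succ_right_eq (m + (j + 1) - 1) j
    have hsub : m + (j + 1) - 1 - j = m := by omega
    rw [hsub] at h
    have := congrArg (Nat.cast : ℕ → ℚ) h
    push_cast at this
    linarith
  have key2 : ∀ j : ℕ, m - k = j + 1 → ((j : ℚ) + 1) * ((2 * m - k - 1).choose (j + 1) : ℚ)
      = (m : ℚ) * ((2 * m - k - 1).choose j : ℚ) := by
    intro j hj
    have h := Nat.choose_succ_right_eq (2 * m - k - 1) j
    have hsub : 2 * m - k - 1 - j = m := by omega
    rw [hsub] at h
    have := congrArg (Nat.cast : ℕ → ℚ) h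
    push_cast at this
    linarith
  have e1 : ∃ a : ℤ, ((k : ℚ) / (m : ℚ)) * ((m + k - 1).choose k : ℚ) *
      ((2 * m - k - 1).choose (m - k) : ℚ) = (a : ℚ) := by
    cases k with
    | zero => exact ⟨0, by simp⟩
    | succ j =>
      refine ⟨((m + (j + 1) - 1).choose j : ℤ) * ((2 * m - (j + 1) - 1).choose (m - (j + 1)) : ℤ), ?_⟩
      have h : ((j + 1 : ℕ) : ℚ) / (m : ℚ) * ((m + (j + 1) - 1).choose (j + 1) : ℚ)
          = ((m + (j + 1) - 1).choose j : ℚ) := by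
        have := key1 j
        have hi : m + (j + 1) - 1 = m + j := by omega
        rw [hi] at this ⊢
        field_simp
        push_cast
        linarith
      rw [h]; push_cast; ring
  have e2 : ∃ a : ℤ, (((m - k : ℕ) : ℚ) / (m : ℚ)) * ((m + k - 1).choose k : ℚ) *
      ((2 * m - k - 1).choose (m - k) : ℚ) = (a : ℚ) := by
    rcases Nat.eq_zero_or_pos (m - k) with h0 | h0
    · exact ⟨0, by rw [h0]; simp⟩
    · obtain ⟨j, hj⟩ : ∃ j, m - k = j + 1 := ⟨m - k - 1, by omega⟩
      refine ⟨((m + k - 1).choose k : ℤ) * ((2 * m - k - 1).choose j : ℤ), ?_⟩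
      have h : (((m - k : ℕ) : ℚ) / (m : ℚ)) * ((2 * m - k - 1).choose (m - k) : ℚ)
          = ((2 * m - k - 1).choose j : ℚ) := by
        have := key2 j hj
        rw [hj]
        field_simp
        push_cast
        linarith
      calc (((m - k : ℕ) : ℚ) / (m : ℚ)) * ((m + k - 1).choose k : ℚ) *
          ((2 * m - k - 1).choose (m - k) : ℚ)
          = ((m + k - 1).choose k : ℚ) * ((((m - k : ℕ) : ℚ) / (m : ℚ)) *
            ((2 * m - k - 1).choose (m - k) : ℚ)) := by ring
        _ = _ := by rw [h]; push_cast; ring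
  -- dCoeffQ in terms of choose
  have hd : dCoeffQ m k = -(1 / (m : ℚ)) * ((-1) ^ k * ((m + k - 1).choose k : ℚ)) *
      ((-1) ^ (m - k) * ((m + (m - k) - 1).choose (m - k) : ℚ)) := by
    rw [dCoeffQ, negBinomQ_eq, negBinomQ_eq]
  have hidx : m + (m - k) - 1 = 2 * m - k - 1 := by omega
  have hsign : ((-1 : ℚ)) ^ k * (-1) ^ (m - k) = (-1) ^ m := by
    rw [← pow_add]; congr 1; omega
  have hd2 : dCoeffQ m k = -(-1 : ℚ) ^ m * ((1 / (m : ℚ)) * ((m + k - 1).choose k : ℚ) *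
      ((2 * m - k - 1).choose (m - k) : ℚ)) := by
    rw [hd, hidx]
    have : -(1 / (m : ℚ)) * ((-1) ^ k * ((m + k - 1).choose k : ℚ)) *
        ((-1) ^ (m - k) * ((2 * m - k - 1).choose (m - k) : ℚ))
        = -(((-1:ℚ)) ^ k * (-1) ^ (m - k)) * ((1 / (m : ℚ)) * ((m + k - 1).choose k : ℚ) *
          ((2 * m - k - 1).choose (m - k) : ℚ)) := by ring
    rw [this, hsign]
  obtain ⟨a1, ha1⟩ := e1
  obtain ⟨a2, ha2⟩ := e2
  refine ⟨⟨a1, ha1⟩, ⟨a2, ha2⟩, ⟨-(-1) ^ m * a1, ?_⟩, ⟨-(-1) ^ m * a2, ?_⟩⟩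
  · rw [hd2]
    have : (k : ℚ) * (-(-1 : ℚ) ^ m * ((1 / (m : ℚ)) * ((m + k - 1).choose k : ℚ) *
        ((2 * m - k - 1).choose (m - k) : ℚ)))
        = -(-1 : ℚ) ^ m * (((k : ℚ) / (m : ℚ)) * ((m + k - 1).choose k : ℚ) *
          ((2 * m - k - 1).choose (m - k) : ℚ)) := by ring
    rw [this, ha1]; push_cast; ring
  · rw [hd2]
    have : ((m - k : ℕ) : ℚ) * (-(-1 : ℚ) ^ m * ((1 / (m : ℚ)) * ((m + k - 1).choose k : ℚ) *
        ((2 * m - k - 1).choose (m - k) : ℚ)))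
        = -(-1 : ℚ) ^ m * ((((m - k : ℕ) : ℚ) / (m : ℚ)) * ((m + k - 1).choose k : ℚ) *
          ((2 * m - k - 1).choose (m - k) : ℚ)) := by ring
    rw [this, ha2]; push_cast; ring
end
end

section
/- Let w_1,…,w_k be distinct complex numbers, m_1,…,m_k integers, c ∈ ℂ and R > 0 with |c − w_i| ≠ R for all i. Then (1/(2πi)) ∮_{|t−c|=R} ∏_{i=1}^k (t−w_i)^{m_i} dt belongs to the subring of ℂ generated by the integers together with the elements (w_i−w_j) and (w_i−w_j)^{−1} for i ≠ j. In particular it is an integer-coefficient Laurent polynomial expression in the differences w_i−w_j. -/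
open scoped BigOperators

noncomputable section

namespace Stmt16

variable {k : ℕ} (w : Fin k → ℂ) (c : ℂ) (R : ℝ)

/-- The subring generated by differences and their inverses. -/
def S : Subring ℂ :=
  Subring.closure {x : ℂ | ∃ i j, i ≠ j ∧ (x = w i - w j ∨ x = (w i - w j)⁻¹)}

/-- Elementary functions on the sphere. -/
def E (i : Fin k) (n : ℤ) : (Metric.sphere c R) → ℂ := fun z => ((z : ℂ) - w i) ^ n

/-- The `S`-span of the elementary functions together with `1`. -/
def M : Submodule (S w) ((Metric.sphere c R) → ℂ) :=
  Submodule.span (S w) (insert 1 (Set.range fun p : Fin k × ℤ => E w c R p.1 p.2))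

variable {w c R}

lemma ne_w (h : ∀ i, ‖c - w i‖ ≠ R) (z : Metric.sphere c R) (i : Fin k) :
    (z : ℂ) ≠ w i := by
  intro e
  apply h i
  have hz : dist (z : ℂ) c = R := z.2
  rw [Complex.dist_eq, e] at hz
  rw [← hz, norm_sub_rev]

lemma one_mem' : (1 : (Metric.sphere c R) → ℂ) ∈ M w c R :=
  Submodule.subset_span (Set.mem_insert _ _)

lemma E_mem (i : Fin k) (n : ℤ) : E w c R i n ∈ M w c R :=
  Submodule.subset_span (Set.mem_insert_of_mem _ ⟨(i, n), rfl⟩)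

lemma diff_mem {i j : Fin k} (hij : i ≠ j) : w i - w j ∈ S w :=
  Subring.subset_closure ⟨i, j, hij, Or.inl rfl⟩

lemma diff_inv_mem {i j : Fin k} (hij : i ≠ j) : (w i - w j)⁻¹ ∈ S w :=
  Subring.subset_closure ⟨i, j, hij, Or.inr rfl⟩

/-- Binomial case: nonnegative power times any power, distinct centers. -/
lemma L1 (h : ∀ i, ‖c - w i‖ ≠ R) {i j : Fin k} (hij : i ≠ j) (n : ℕ) (p : ℤ) :
    E w c R i n * E w c R j p ∈ M w c R := by
  have coefmem : ∀ l : ℕ, (w j - w i) ^ (n - l) * (n.choose l : ℂ) ∈ S w :=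
    fun l => mul_mem (pow_mem (diff_mem hij.symm) _) (natCast_mem _ _)
  have key : E w c R i n * E w c R j p =
      ∑ l ∈ Finset.range (n + 1),
        (⟨(w j - w i) ^ (n - l) * (n.choose l : ℂ), coefmem l⟩ : S w) • E w c R j ((l : ℤ) + p) := by
    funext z
    have hzj : (z : ℂ) - w j ≠ 0 := sub_ne_zero.2 (ne_w h z j)
    have hzi : (z : ℂ) - w i = ((z : ℂ) - w j) + (w j - w i) := by ring
    simp only [Pi.mul_apply, Finset.sum_apply, Pi.smul_apply, E]
    rw [zpow_natCast, hzi, add_pow, Finset.sum_mul]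
    refine Finset.sum_congr rfl fun l hl => ?_
    have : (⟨(w j - w i) ^ (n - l) * (n.choose l : ℂ), coefmem l⟩ : S w) •
        (((z : ℂ) - w j) ^ ((l : ℤ) + p)) =
        ((w j - w i) ^ (n - l) * (n.choose l : ℂ)) * (((z : ℂ) - w j) ^ ((l : ℤ) + p)) := rfl
    rw [this, zpow_add₀ hzj, zpow_natCast]
    ring
  rw [key]
  exact Submodule.sum_mem _ fun l _ => Submodule.smul_mem _ _ (E_mem j _)

/-- The key partial-fraction identity. -/
lemma aux (a b : ℕ) {x y : ℂ} (hx : x ≠ 0) (hy : y ≠ 0) (hd : y - x ≠ 0) :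
    (x ^ (a + 1))⁻¹ * (y ^ (b + 1))⁻¹ =
      (y - x)⁻¹ * ((x ^ (a + 1))⁻¹ * (y ^ b)⁻¹ - (x ^ a)⁻¹ * (y ^ (b + 1))⁻¹) := by
  have h1 : (x ^ a)⁻¹ = (x ^ (a + 1))⁻¹ * x := by
    rw [pow_succ, mul_inv, mul_assoc, inv_mul_cancel₀ hx, mul_one]
  have h2 : (y ^ b)⁻¹ = (y ^ (b + 1))⁻¹ * y := by
    rw [pow_succ, mul_inv, mul_assoc, inv_mul_cancel₀ hy, mul_one]
  rw [h1, h2]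
  have h3 : (x ^ (a + 1))⁻¹ * ((y ^ (b + 1))⁻¹ * y) - (x ^ (a + 1))⁻¹ * x * (y ^ (b + 1))⁻¹ =
      (x ^ (a + 1))⁻¹ * (y ^ (b + 1))⁻¹ * (y - x) := by ring
  rw [h3, mul_comm ((y - x)⁻¹), mul_assoc, mul_inv_cancel₀ hd, mul_one]

/-- Both-negative case. -/
lemma L2 (h : ∀ i, ‖c - w i‖ ≠ R) (hw : Function.Injective w)
    {i j : Fin k} (hij : i ≠ j) :
    ∀ N a b : ℕ, a + b ≤ N → E w c R i (-(a : ℤ)) * E w c R j (-(b : ℤ)) ∈ M w c R := by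
  intro N
  induction N with
  | zero =>
    intro a b hab
    have ha : a = 0 := by omega
    have hb : b = 0 := by omega
    subst ha; subst hb
    have : E w c R i (-(0 : ℕ) : ℤ) * E w c R j (-(0 : ℕ) : ℤ) =
        (1 : (Metric.sphere c R) → ℂ) := by
      funext z; simp [E]
    rw [this]; exact one_mem'
  | succ N IH =>
    intro a b hab
    rcases Nat.eq_zero_or_pos a with ha | ha
    · subst ha
      have : E w c R i (-(0 : ℕ) : ℤ) * E w c R j (-(b : ℤ)) = E w c R j (-(b : ℤ)) := by
        funext z; simp [E]
      rw [this]; exact E_mem j _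
    rcases Nat.eq_zero_or_pos b with hb | hb
    · subst hb
      have : E w c R i (-(a : ℤ)) * E w c R j (-(0 : ℕ) : ℤ) = E w c R i (-(a : ℤ)) := by
        funext z; simp [E]
      rw [this]; exact E_mem i _
    obtain ⟨a', rfl⟩ : ∃ a', a = a' + 1 := ⟨a - 1, by omega⟩
    obtain ⟨b', rfl⟩ : ∃ b', b = b' + 1 := ⟨b - 1, by omega⟩
    have hd : w i - w j ≠ 0 := sub_ne_zero.2 fun e => hij (hw e)
    have key : E w c R i (-(a' + 1 : ℕ) : ℤ) * E w c R j (-(b' + 1 : ℕ) : ℤ) =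
        (⟨(w i - w j)⁻¹, diff_inv_mem hij⟩ : S w) •
          (E w c R i (-(a' + 1 : ℕ) : ℤ) * E w c R j (-(b' : ℕ) : ℤ) -
           E w c R i (-(a' : ℕ) : ℤ) * E w c R j (-(b' + 1 : ℕ) : ℤ)) := by
      funext z
      have hzi : (z : ℂ) - w i ≠ 0 := sub_ne_zero.2 (ne_w h z i)
      have hzj : (z : ℂ) - w j ≠ 0 := sub_ne_zero.2 (ne_w h z j)
      have hsmul : ∀ (s : S w) (x : ℂ), s • x = (s : ℂ) * x := fun _ _ => rfl
      simp only [Pi.smul_apply, Pi.sub_apply, Pi.mul_apply, E, hsmul, zpow_neg, zpow_natCast]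
      have hdiff : w i - w j = ((z : ℂ) - w j) - ((z : ℂ) - w i) := by ring
      rw [hdiff]
      have hd' : ((z : ℂ) - w j) - ((z : ℂ) - w i) ≠ 0 := by
        intro e; exact hd (by linear_combination e)
      exact Stmt16.aux a' b' hzi hzj hd'
    rw [key]
    refine Submodule.smul_mem _ _ (sub_mem ?_ ?_)
    · exact IH (a' + 1) b' (by omega)
    · exact IH a' (b' + 1) (by omega)

lemma E_mul_E_mem (h : ∀ i, ‖c - w i‖ ≠ R) (hw : Function.Injective w)
    (i j : Fin k) (n p : ℤ) : E w c R i n * E w c R j p ∈ M w c R := by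
  rcases eq_or_ne i j with rfl | hij
  · have : E w c R i n * E w c R i p = E w c R i (n + p) := by
      funext z
      exact (zpow_add₀ (sub_ne_zero.2 (ne_w h z i)) n p).symm
    rw [this]; exact E_mem i _
  rcases le_or_gt 0 n with hn | hn
  · have : n = (n.toNat : ℤ) := (Int.toNat_of_nonneg hn).symm
    rw [this]; exact L1 h hij n.toNat p
  rcases le_or_gt 0 p with hp | hp
  · have : p = (p.toNat : ℤ) := (Int.toNat_of_nonneg hp).symm
    rw [mul_comm, this]; exact L1 h hij.symm p.toNat n
  obtain ⟨a, rfl⟩ : ∃ a : ℕ, n = -(a : ℤ) := ⟨n.natAbs, by omega⟩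
  obtain ⟨b, rfl⟩ : ∃ b : ℕ, p = -(b : ℤ) := ⟨p.natAbs, by omega⟩
  exact L2 h hw hij (a + b) a b le_rfl

lemma mul_E_mem (h : ∀ i, ‖c - w i‖ ≠ R) (hw : Function.Injective w)
    (i : Fin k) (n : ℤ) {f : (Metric.sphere c R) → ℂ} (hf : f ∈ M w c R) :
    E w c R i n * f ∈ M w c R := by
  induction hf using Submodule.span_induction with
  | mem x hx =>
    rcases hx with rfl | ⟨⟨j, p⟩, rfl⟩
    · rw [mul_one]; exact E_mem i n
    · exact E_mul_E_mem h hw i j n p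
  | zero => rw [mul_zero]; exact zero_mem _
  | add x y hx hy ihx ihy => rw [mul_add]; exact add_mem ihx ihy
  | smul a x hx ihx => rw [mul_smul_comm]; exact Submodule.smul_mem _ _ ihx

lemma prod_mem_M (h : ∀ i, ‖c - w i‖ ≠ R) (hw : Function.Injective w)
    (m : Fin k → ℤ) :
    (fun z : Metric.sphere c R => ∏ i, ((z : ℂ) - w i) ^ (m i)) ∈ M w c R := by
  have : ∀ s : Finset (Fin k),
      (fun z : Metric.sphere c R => ∏ i ∈ s, ((z : ℂ) - w i) ^ (m i)) ∈ M w c R := by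
    intro s
    induction s using Finset.induction with
    | empty =>
      have : (fun z : Metric.sphere c R => ∏ i ∈ (∅ : Finset (Fin k)), ((z : ℂ) - w i) ^ (m i)) =
          (1 : (Metric.sphere c R) → ℂ) := by funext z; simp
      rw [this]; exact one_mem'
    | insert j s hi ih =>
      have : (fun z : Metric.sphere c R => ∏ i ∈ insert j s, ((z : ℂ) - w i) ^ (m i)) =
          E w c R j (m j) * (fun z : Metric.sphere c R => ∏ i ∈ s, ((z : ℂ) - w i) ^ (m i)) := by
        funext z; simp [E, Finset.prod_insert hi]
      rw [this]; exact mul_E_mem h hw j (m j) ih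
  exact this Finset.univ

lemma integral_prop (hR : 0 < R) (h : ∀ i, ‖c - w i‖ ≠ R)
    {f : (Metric.sphere c R) → ℂ} (hf : f ∈ M w c R) :
    ∃ g : ℂ → ℂ, (∀ z (hz : z ∈ Metric.sphere c R), g z = f ⟨z, hz⟩) ∧
      CircleIntegrable g c R ∧
      (2 * (Real.pi : ℂ) * Complex.I)⁻¹ * (∮ t in C(c, R), g t) ∈ S w := by
  have habsR : |R| = R := abs_of_pos hR
  induction hf using Submodule.span_induction with
  | mem x hx =>
    rcases hx with rfl | ⟨⟨j, p⟩, rfl⟩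
    · refine ⟨fun _ => 1, fun z hz => rfl, circleIntegrable_const 1 c R, ?_⟩
      have : (∮ t in C(c, R), (1 : ℂ)) = ∮ t in C(c, R), (t - c) ^ (0 : ℤ) :=
        circleIntegral.integral_congr hR.le fun t _ => (zpow_zero _).symm
      rw [this, circleIntegral.integral_sub_zpow_of_ne (by decide) c c R, mul_zero]
      exact zero_mem _
    · refine ⟨fun z => (z - w j) ^ p, fun z hz => rfl, ?_, ?_⟩
      · rw [circleIntegrable_sub_zpow_iff]
        refine Or.inr (Or.inr fun hm => h j ?_)
        rw [Metric.mem_sphere, Complex.dist_eq, habsR] at hm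
        rw [← hm, norm_sub_rev]
      · by_cases hp : p = -1
        · subst hp
          have heq : (∮ t in C(c, R), (t - w j) ^ (-1 : ℤ)) = ∮ t in C(c, R), (t - w j)⁻¹ :=
            circleIntegral.integral_congr hR.le fun t _ => zpow_neg_one _
          rcases lt_or_gt_of_ne (h j) with hlt | hgt
          · have hmem : w j ∈ Metric.ball c R := by
              rw [Metric.mem_ball, Complex.dist_eq, norm_sub_rev]
              exact hlt
            rw [heq, circleIntegral.integral_sub_inv_of_mem_ball hmem,
              inv_mul_cancel₀ Complex.two_pi_I_ne_zero]
            exact one_mem _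
          · have hne : ∀ z ∈ Metric.closedBall c R, z ≠ w j := by
              intro z hz he
              rw [Metric.mem_closedBall, he, Complex.dist_eq, norm_sub_rev] at hz
              exact absurd hz (not_le.2 hgt)
            have hzero : (∮ t in C(c, R), (t - w j)⁻¹) = 0 := by
              refine Complex.circleIntegral_eq_zero_of_differentiable_on_off_countable hR.le
                Set.countable_empty ?_ ?_
              · exact (continuousOn_id.sub continuousOn_const).inv₀
                  fun z hz => sub_ne_zero.2 (hne z hz)
              · intro z hz
                exact ((differentiableAt_id.sub_const _).inv
                  (sub_ne_zero.2 (hne z (Metric.ball_subset_closedBall hz.1))))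
            rw [heq, hzero, mul_zero]
            exact zero_mem _
        · rw [circleIntegral.integral_sub_zpow_of_ne hp, mul_zero]
          exact zero_mem _
  | zero =>
    refine ⟨fun _ => 0, fun z hz => rfl, circleIntegrable_const 0 c R, ?_⟩
    have : (∮ t in C(c, R), (0 : ℂ)) = 0 := by
      simp [circleIntegral]
    rw [this, mul_zero]; exact zero_mem _
  | add x y hx hy ihx ihy =>
    obtain ⟨g₁, hg₁, hi₁, hs₁⟩ := ihx
    obtain ⟨g₂, hg₂, hi₂, hs₂⟩ := ihy
    refine ⟨g₁ + g₂, fun z hz => by simp [hg₁ z hz, hg₂ z hz], hi₁.add hi₂, ?_⟩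
    have : (∮ t in C(c, R), (g₁ + g₂) t) =
        (∮ t in C(c, R), g₁ t) + ∮ t in C(c, R), g₂ t := by
      simp only [circleIntegral, Pi.add_apply, smul_add]
      exact intervalIntegral.integral_add hi₁.out hi₂.out
    rw [this, mul_add]
    exact add_mem hs₁ hs₂
  | smul a x hx ihx =>
    obtain ⟨g, hg, hi, hs⟩ := ihx
    have hgi : CircleIntegrable ((a : ℂ) • g) c R := by
      simp only [CircleIntegrable] at hi ⊢
      simpa [Pi.smul_apply, smul_eq_mul] using hi.const_mul (a : ℂ)
    refine ⟨(a : ℂ) • g, fun z hz => ?_, hgi, ?_⟩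
    · have : (a • x) ⟨z, hz⟩ = (a : ℂ) * x ⟨z, hz⟩ := rfl
      simp [this, hg z hz]
    · have hint : (∮ t in C(c, R), ((a : ℂ) • g) t) = (a : ℂ) * ∮ t in C(c, R), g t := by
        simp only [Pi.smul_apply, smul_eq_mul]
        simp [smul_eq_mul, ← circleIntegral.integral_smul (a : ℂ) g c R]
      rw [hint, mul_left_comm]
      exact mul_mem a.2 hs

end Stmt16

/-- for distinct `w₁,…,w_k`, integers `m₁,…,m_k`, and a circle
`|t−c| = R` not passing through any `w_i`, the normalized contour integral
`(1/2πi) ∮ ∏ (t−w_i)^{m_i} dt` belongs to the subring of `ℂ` generated by the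
differences `w_i−w_j` and their inverses (`i ≠ j`); in particular it is an
integer-coefficient Laurent polynomial expression in the differences. -/
theorem stmt_16 (k : ℕ) (w : Fin k → ℂ) (hw : Function.Injective w)
    (m : Fin k → ℤ) (c : ℂ) (R : ℝ) (hR : 0 < R)
    (h : ∀ i, ‖c - w i‖ ≠ R) :
    (2 * (Real.pi : ℂ) * Complex.I)⁻¹ *
        (∮ t in C(c, R), ∏ i, (t - w i) ^ (m i)) ∈
      Subring.closure
        {x : ℂ | ∃ i j, i ≠ j ∧ (x = w i - w j ∨ x = (w i - w j)⁻¹)} := by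
  obtain ⟨g, hg, hgi, hgs⟩ := Stmt16.integral_prop hR h (Stmt16.prod_mem_M h hw m)
  have heq : (∮ t in C(c, R), ∏ i, (t - w i) ^ (m i)) = ∮ t in C(c, R), g t :=
    (circleIntegral.integral_congr hR.le fun z hz => hg z hz).symm
  rw [heq]
  exact hgs

end
end
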